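/- arXiv:2204.01803 — 4 statements merged into one kernel-verified Lean document; each statement's English description precedes it below -/
import Mathlib

section
/- For all i, j ∈ {1,…,n}: E[I_{i,j}] = 1/6 − 1/(6n) if i = j, and E[I_{i,j}] = −1/(6n) if i ≠ j. -/
open MeasureTheory ProbabilityTheory Filter Finset Topology

noncomputable section

/-- The rank `R_i` of `X_i` among `X_1, …, X_n` (as a real number). -/
def rank1 {Ω : Type} {n : ℕ} (X : Fin n → Ω → ℝ) (i : Fin n) (ω : Ω) : ℝ :=
  ∑ j : Fin n, if X j ω ≤ X i ω then (1 : ℝ) else 0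

/-- The quantity `I_{i,j}`. -/
def I1 {Ω : Type} {n : ℕ} (X : Fin n → Ω → ℝ) (i j : Fin n) (ω : Ω) : ℝ :=
  (2 * (n : ℝ) + 1) / (6 * (n : ℝ))
    + rank1 X i ω * (rank1 X i ω - 1) / (2 * (n : ℝ) * ((n : ℝ) + 1))
    + rank1 X j ω * (rank1 X j ω - 1) / (2 * (n : ℝ) * ((n : ℝ) + 1))
    - max (rank1 X i ω) (rank1 X j ω) / ((n : ℝ) + 1)

/-- The centred quantity `Ĩ_{i,j}`. -/
def Itil1 {Ω : Type} {n : ℕ} (X : Fin n → Ω → ℝ) (i j : Fin n) (ω : Ω) : ℝ :=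
  if i = j then I1 X i j ω - (1 / 6 - 1 / (6 * (n : ℝ)))
  else I1 X i j ω + 1 / (6 * (n : ℝ))

/-- The basic model assumptions: measurability, `X_1, …, X_n` are i.i.d. real-valued
random variables, and their common cdf is continuous. -/
def IID1 {Ω : Type} [MeasurableSpace Ω] {n : ℕ} (X : Fin n → Ω → ℝ)
    (P : Measure Ω) : Prop :=
  (∀ i, Measurable (X i)) ∧
  iIndepFun X P ∧
  (∀ i j : Fin n, Measure.map (X i) P = Measure.map (X j) P) ∧
  (∀ i : Fin n, Continuous fun t : ℝ => (P {ω | X i ω ≤ t}).toReal)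


set_option linter.unusedSectionVars false

open scoped ENNReal

section AuxLemmas

lemma aux_atomless {Ω : Type} [MeasurableSpace Ω] (P : Measure Ω) [IsProbabilityMeasure P]
    (Y : Ω → ℝ) (hY : Measurable Y)
    (hc : Continuous fun t : ℝ => (P {ω | Y ω ≤ t}).toReal) (x : ℝ) :
    Measure.map Y P {x} = 0 := by
  set μ := Measure.map Y P with hμ
  have : IsProbabilityMeasure μ := Measure.isProbabilityMeasure_map hY.aemeasurable
  have hPμ : ∀ t : ℝ, P {ω | Y ω ≤ t} = μ (Set.Iic t) := by
    intro t
    rw [hμ, Measure.map_apply hY measurableSet_Iic]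
    rfl
  set F : ℝ → ℝ := fun t => (μ (Set.Iic t)).toReal with hF
  have hFc : Continuous F := by
    have : F = fun t => (P {ω | Y ω ≤ t}).toReal := by
      funext t; rw [hPμ t]
    rw [this]; exact hc
  have key : ∀ t : ℝ, t < x → (μ {x}).toReal ≤ F x - F t := by
    intro t ht
    have h1 : μ {x} ≤ μ (Set.Ioc t x) :=
      measure_mono (Set.singleton_subset_iff.mpr ⟨ht, le_refl x⟩)
    have h2 : μ (Set.Ioc t x) = μ (Set.Iic x) - μ (Set.Iic t) := by
      rw [← Set.Iic_sdiff_Iic]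
      exact measure_diff (Set.Iic_subset_Iic.mpr ht.le)
        measurableSet_Iic.nullMeasurableSet (measure_ne_top μ _)
    have h3 : (μ (Set.Ioc t x)).toReal = F x - F t := by
      rw [h2, ENNReal.toReal_sub_of_le (measure_mono (Set.Iic_subset_Iic.mpr ht.le))
        (measure_ne_top μ _)]
    rw [← h3]
    exact ENNReal.toReal_mono (measure_ne_top μ _) h1
  have htend : Tendsto (fun t => F x - F t) (𝓝[<] x) (𝓝 0) := by
    have h : Tendsto F (𝓝[<] x) (𝓝 (F x)) :=
      (hFc.tendsto x).mono_left nhdsWithin_le_nhds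
    have h2 : Tendsto (fun t => F x - F t) (𝓝[<] x) (𝓝 (F x - F x)) :=
      tendsto_const_nhds.sub h
    simpa using h2
  have hev : ∀ᶠ t in 𝓝[<] x, (μ {x}).toReal ≤ F x - F t := by
    filter_upwards [self_mem_nhdsWithin] with t ht
    exact key t ht
  have hle : (μ {x}).toReal ≤ 0 := ge_of_tendsto htend hev
  have : (μ {x}).toReal = 0 := le_antisymm hle ENNReal.toReal_nonneg
  exact (ENNReal.toReal_eq_zero_iff _).mp this |>.resolve_right (measure_ne_top μ _)


lemma ite_one_mul_ite_one (p q : Prop) [Decidable p] [Decidable q] :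
    (if p then (1:ℝ) else 0) * (if q then (1:ℝ) else 0) = if p ∧ q then (1:ℝ) else 0 := by
  by_cases hp : p <;> by_cases hq : q <;> simp [hp, hq]

lemma max_rank_eq {Ω : Type} {n : ℕ} (X : Fin n → Ω → ℝ) (i j : Fin n) (ω : Ω) :
    max (rank1 X i ω) (rank1 X j ω)
      = ∑ k : Fin n, if X k ω ≤ X i ω ∨ X k ω ≤ X j ω then (1:ℝ) else 0 := by
  rcases le_total (X i ω) (X j ω) with h | h
  · have h1 : rank1 X i ω ≤ rank1 X j ω := by
      apply Finset.sum_le_sum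
      intro k _
      by_cases hk : X k ω ≤ X i ω
      · simp [hk, hk.trans h]
      · by_cases hk' : X k ω ≤ X j ω <;> simp [hk, hk']
    rw [max_eq_right h1, rank1]
    apply Finset.sum_congr rfl
    intro k _
    by_cases hk : X k ω ≤ X j ω
    · simp [hk]
    · have : ¬ X k ω ≤ X i ω := fun hc => hk (hc.trans h)
      simp [hk, this]
  · have h1 : rank1 X j ω ≤ rank1 X i ω := by
      apply Finset.sum_le_sum
      intro k _
      by_cases hk : X k ω ≤ X j ω
      · simp [hk, hk.trans h]
      · by_cases hk' : X k ω ≤ X i ω <;> simp [hk, hk']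
    rw [max_eq_left h1, rank1]
    apply Finset.sum_congr rfl
    intro k _
    by_cases hk : X k ω ≤ X i ω
    · simp [hk]
    · have : ¬ X k ω ≤ X j ω := fun hc => hk (hc.trans h)
      simp [hk, this]

lemma rank_mul_sub_one {Ω : Type} {n : ℕ} (X : Fin n → Ω → ℝ) (i : Fin n) (ω : Ω) :
    rank1 X i ω * (rank1 X i ω - 1)
      = ∑ j : Fin n, ∑ k ∈ Finset.univ.erase j,
          (if X j ω ≤ X i ω ∧ X k ω ≤ X i ω then (1:ℝ) else 0) := by
  classical
  set a : Fin n → ℝ := fun k => if X k ω ≤ X i ω then (1:ℝ) else 0 with ha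
  have haa : ∀ k, a k * a k = a k := by
    intro k; simp only [ha]; by_cases h : X k ω ≤ X i ω <;> simp [h]
  have hr : rank1 X i ω = ∑ k : Fin n, a k := rfl
  have hsum : ∀ j : Fin n, ∑ k : Fin n, a j * a k
      = a j + ∑ k ∈ Finset.univ.erase j, a j * a k := by
    intro j
    calc ∑ k : Fin n, a j * a k
        = a j * a j + ∑ k ∈ Finset.univ.erase j, a j * a k :=
          (Finset.add_sum_erase Finset.univ (fun k => a j * a k) (Finset.mem_univ j)).symm
      _ = a j + ∑ k ∈ Finset.univ.erase j, a j * a k := by rw [haa j]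
  have key : (∑ k : Fin n, a k) * ((∑ k : Fin n, a k) - 1)
      = ∑ j : Fin n, ∑ k ∈ Finset.univ.erase j, a j * a k := by
    have h2 : (∑ k : Fin n, a k) * (∑ k : Fin n, a k)
        = ∑ j : Fin n, ∑ k : Fin n, a j * a k := by
      rw [Finset.sum_mul_sum]
    have h3 : ∑ j : Fin n, ∑ k : Fin n, a j * a k
        = (∑ j : Fin n, a j) + ∑ j : Fin n, ∑ k ∈ Finset.univ.erase j, a j * a k := by
      rw [← Finset.sum_add_distrib]
      exact Finset.sum_congr rfl fun j _ => hsum j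
    rw [mul_sub, mul_one, h2, h3]
    ring
  rw [hr, key]
  apply Finset.sum_congr rfl
  intro j _
  apply Finset.sum_congr rfl
  intro k _
  exact ite_one_mul_ite_one _ _


variable {Ω : Type} [MeasurableSpace Ω] {P : Measure Ω} [IsProbabilityMeasure P]

lemma ite_fun_eq_indicator (p : Ω → Prop) [∀ ω, Decidable (p ω)] :
    (fun ω => if p ω then (1:ℝ) else 0) = Set.indicator {ω | p ω} (fun _ => 1) := by
  funext ω
  by_cases h : p ω <;> simp [Set.indicator_apply, h]

lemma integral_ite_one (p : Ω → Prop) [∀ ω, Decidable (p ω)]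
    (hp : MeasurableSet {ω | p ω}) :
    ∫ ω, (if p ω then (1:ℝ) else 0) ∂P = (P {ω | p ω}).toReal := by
  rw [show (fun ω => if p ω then (1:ℝ) else 0) = Set.indicator {ω | p ω} (fun _ => 1) from
    ite_fun_eq_indicator p]
  exact integral_indicator_one hp
  
lemma integrable_ite_one (p : Ω → Prop) [∀ ω, Decidable (p ω)]
    (hp : MeasurableSet {ω | p ω}) :
    Integrable (fun ω => if p ω then (1:ℝ) else 0) P := by
  rw [ite_fun_eq_indicator p]
  exact (integrable_const 1).indicator hp


variable {n : ℕ} {X : Fin n → Ω → ℝ}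


lemma pair_law (hX : IID1 X P) {k l : Fin n} (hkl : k ≠ l) :
    Measure.map (fun ω => (X k ω, X l ω)) P
      = (Measure.map (X k) P).prod (Measure.map (X l) P) :=
  (indepFun_iff_map_prod_eq_prod_map_map (hX.1 k).aemeasurable (hX.1 l).aemeasurable).mp
    (hX.2.1.indepFun hkl)

lemma triple_law (hX : IID1 X P) {k l m : Fin n} (hlk : l ≠ k) (hmk : m ≠ k) (hlm : l ≠ m) :
    Measure.map (fun ω => (X k ω, (X l ω, X m ω))) P
      = (Measure.map (X k) P).prod
          ((Measure.map (X l) P).prod (Measure.map (X m) P)) := by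
  have h1 : IndepFun (X k) (fun ω => (X l ω, X m ω)) P :=
    (hX.2.1.indepFun_prodMk hX.1 l m k hlk hmk).symm
  have h2 := (indepFun_iff_map_prod_eq_prod_map_map (hX.1 k).aemeasurable
    ((hX.1 l).prodMk (hX.1 m)).aemeasurable).mp h1
  rw [h2, pair_law hX hlm]

lemma tie_zero (hX : IID1 X P) {k l : Fin n} (hkl : k ≠ l) :
    P {ω | X k ω = X l ω} = 0 := by
  have hS : MeasurableSet {p : ℝ × ℝ | p.1 = p.2} := by
    have : {p : ℝ × ℝ | p.1 = p.2}
        = {p : ℝ × ℝ | p.1 ≤ p.2} ∩ {p : ℝ × ℝ | p.2 ≤ p.1} := by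
      ext p; simp [le_antisymm_iff]
    rw [this]
    exact (measurableSet_le measurable_fst measurable_snd).inter
      (measurableSet_le measurable_snd measurable_fst)
  have h1 : P {ω | X k ω = X l ω}
      = Measure.map (fun ω => (X k ω, X l ω)) P {p : ℝ × ℝ | p.1 = p.2} := by
    rw [Measure.map_apply ((hX.1 k).prodMk (hX.1 l)) hS]; rfl
  rw [h1, pair_law hX hkl, hX.2.2.1 l k, Measure.prod_apply hS]
  have hpre : ∀ x : ℝ, Prod.mk x ⁻¹' {p : ℝ × ℝ | p.1 = p.2} = {x} := by
    intro x; ext y; simp [eq_comm]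
  have h2 : ∀ x : ℝ, Measure.map (X k) P {x} = 0 := fun x =>
    aux_atomless P (X k) (hX.1 k) (hX.2.2.2 k) x
  simp only [hpre, h2, lintegral_zero]

lemma prob_le_half (hX : IID1 X P) {k l : Fin n} (hkl : k ≠ l) :
    P {ω | X l ω ≤ X k ω} = 1 / 2 := by
  have hS : MeasurableSet {p : ℝ × ℝ | p.2 ≤ p.1} :=
    measurableSet_le measurable_snd measurable_fst
  have hA : P {ω | X l ω ≤ X k ω}
      = ((Measure.map (X k) P).prod (Measure.map (X k) P)) {p : ℝ × ℝ | p.2 ≤ p.1} := by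
    rw [show P {ω | X l ω ≤ X k ω}
        = Measure.map (fun ω => (X k ω, X l ω)) P {p : ℝ × ℝ | p.2 ≤ p.1} from by
      rw [Measure.map_apply ((hX.1 k).prodMk (hX.1 l)) hS]; rfl]
    rw [pair_law hX hkl, hX.2.2.1 l k]
  have hB : P {ω | X k ω ≤ X l ω}
      = ((Measure.map (X k) P).prod (Measure.map (X k) P)) {p : ℝ × ℝ | p.2 ≤ p.1} := by
    rw [show P {ω | X k ω ≤ X l ω}
        = Measure.map (fun ω => (X l ω, X k ω)) P {p : ℝ × ℝ | p.2 ≤ p.1} from by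
      rw [Measure.map_apply ((hX.1 l).prodMk (hX.1 k)) hS]; rfl]
    rw [pair_law hX hkl.symm, hX.2.2.1 l k]
  have hmA : MeasurableSet {ω | X l ω ≤ X k ω} := measurableSet_le (hX.1 l) (hX.1 k)
  have hmB : MeasurableSet {ω | X k ω ≤ X l ω} := measurableSet_le (hX.1 k) (hX.1 l)
  have hunion : {ω | X l ω ≤ X k ω} ∪ {ω | X k ω ≤ X l ω} = Set.univ := by
    ext ω; simpa using le_total (X l ω) (X k ω)
  have hinter : {ω | X l ω ≤ X k ω} ∩ {ω | X k ω ≤ X l ω} = {ω | X k ω = X l ω} := by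
    ext ω; simp [le_antisymm_iff, and_comm]
  have hsum : P ({ω | X l ω ≤ X k ω} ∪ {ω | X k ω ≤ X l ω})
      + P ({ω | X l ω ≤ X k ω} ∩ {ω | X k ω ≤ X l ω})
      = P {ω | X l ω ≤ X k ω} + P {ω | X k ω ≤ X l ω} :=
    measure_union_add_inter _ hmB
  rw [hunion, hinter, tie_zero hX hkl, add_zero, measure_univ] at hsum
  have h2 : (2 : ℝ≥0∞) * P {ω | X l ω ≤ X k ω} = 1 := by
    rw [two_mul]
    nth_rewrite 2 [hA]
    rw [← hB]
    exact hsum.symm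
  exact (ENNReal.eq_div_iff two_ne_zero ENNReal.ofNat_ne_top).mpr h2

lemma prob_top_third (hX : IID1 X P) {k l m : Fin n}
    (hlk : l ≠ k) (hmk : m ≠ k) (hlm : l ≠ m) :
    P {ω | X l ω ≤ X k ω ∧ X m ω ≤ X k ω} = 1 / 3 := by
  set T : Set (ℝ × ℝ × ℝ) := {p | p.2.1 ≤ p.1 ∧ p.2.2 ≤ p.1} with hTdef
  have hT : MeasurableSet T :=
    (measurableSet_le (measurable_fst.comp measurable_snd) measurable_fst).inter
      (measurableSet_le (measurable_snd.comp measurable_snd) measurable_fst)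
  set ν : Measure (ℝ × ℝ × ℝ) := (Measure.map (X k) P).prod
    ((Measure.map (X k) P).prod (Measure.map (X k) P)) with hν
  have gen : ∀ a b c : Fin n, b ≠ a → c ≠ a → b ≠ c →
      P {ω | X b ω ≤ X a ω ∧ X c ω ≤ X a ω} = ν T := by
    intro a b c h1 h2 h3
    rw [show P {ω | X b ω ≤ X a ω ∧ X c ω ≤ X a ω}
        = Measure.map (fun ω => (X a ω, (X b ω, X c ω))) P T from by
      rw [Measure.map_apply ((hX.1 a).prodMk ((hX.1 b).prodMk (hX.1 c))) hT]; rfl]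
    rw [triple_law hX h1 h2 h3, hX.2.2.1 a k, hX.2.2.1 b k, hX.2.2.1 c k]
  set A := {ω | X l ω ≤ X k ω ∧ X m ω ≤ X k ω} with hAdef
  set B := {ω | X k ω ≤ X l ω ∧ X m ω ≤ X l ω} with hBdef
  set C := {ω | X k ω ≤ X m ω ∧ X l ω ≤ X m ω} with hCdef
  have hPA : P A = ν T := gen k l m hlk hmk hlm
  have hPB : P B = ν T := gen l k m hlk.symm (fun h => hlm h.symm) hmk.symm
  have hPC : P C = ν T := gen m k l hmk.symm hlm (fun h => hlk h.symm)
  have hmA : MeasurableSet A := (measurableSet_le (hX.1 l) (hX.1 k)).inter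
    (measurableSet_le (hX.1 m) (hX.1 k))
  have hmB : MeasurableSet B := (measurableSet_le (hX.1 k) (hX.1 l)).inter
    (measurableSet_le (hX.1 m) (hX.1 l))
  have hmC : MeasurableSet C := (measurableSet_le (hX.1 k) (hX.1 m)).inter
    (measurableSet_le (hX.1 l) (hX.1 m))
  have hunion : A ∪ B ∪ C = Set.univ := by
    ext ω
    simp only [hAdef, hBdef, hCdef, Set.mem_union, Set.mem_setOf_eq, Set.mem_univ, iff_true]
    rcases le_total (X k ω) (X l ω) with h1 | h1
    · rcases le_total (X l ω) (X m ω) with h2 | h2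
      · exact Or.inr ⟨h1.trans h2, h2⟩
      · exact Or.inl (Or.inr ⟨h1, h2⟩)
    · rcases le_total (X k ω) (X m ω) with h2 | h2
      · exact Or.inr ⟨h2, h1.trans h2⟩
      · exact Or.inl (Or.inl ⟨h1, h2⟩)
  have hAB : P (A ∩ B) = 0 := by
    apply measure_mono_null _ (tie_zero hX (show k ≠ l from fun h => hlk h.symm))
    intro ω hω
    exact le_antisymm hω.2.1 hω.1.1
  have hABC : P ((A ∪ B) ∩ C) = 0 := by
    refine measure_mono_null ?_ (measure_union_null
      (tie_zero hX (show k ≠ m from fun h => hmk h.symm)) (tie_zero hX hlm))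
    intro ω hω
    rcases hω.1 with h | h
    · exact Or.inl (le_antisymm hω.2.1 h.2)
    · exact Or.inr (le_antisymm hω.2.2 h.2)
  have s1 : P (A ∪ B) + P (A ∩ B) = P A + P B := measure_union_add_inter _ hmB
  have s2 : P (A ∪ B ∪ C) + P ((A ∪ B) ∩ C) = P (A ∪ B) + P C :=
    measure_union_add_inter _ hmC
  rw [hunion, measure_univ, hABC, add_zero] at s2
  rw [hAB, add_zero] at s1
  have h3 : (3 : ℝ≥0∞) * ν T = 1 := by
    have hsum : P A + P B + P C = 1 := by rw [← s1, ← s2]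
    rw [hPA, hPB, hPC] at hsum
    calc (3 : ℝ≥0∞) * ν T = ν T + ν T + ν T := by ring
      _ = 1 := hsum
  rw [hPA]
  exact (ENNReal.eq_div_iff (by norm_num) (by norm_num)).mpr h3

lemma prob_or_twothirds (hX : IID1 X P) {k l m : Fin n}
    (hkl : k ≠ l) (hmk : m ≠ k) (hml : m ≠ l) :
    P {ω | X m ω ≤ X k ω ∨ X m ω ≤ X l ω} = 2 / 3 := by
  set D := {ω | X m ω ≤ X k ω ∨ X m ω ≤ X l ω} with hDdef
  set E := {ω | X k ω < X m ω ∧ X l ω < X m ω} with hEdef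
  set C := {ω | X k ω ≤ X m ω ∧ X l ω ≤ X m ω} with hCdef
  have hmD : MeasurableSet D := (measurableSet_le (hX.1 m) (hX.1 k)).union
    (measurableSet_le (hX.1 m) (hX.1 l))
  have hcompl : Dᶜ = E := by
    ext ω
    simp only [hDdef, hEdef, Set.mem_compl_iff, Set.mem_setOf_eq, not_or, not_le]
  have hPC : P C = 1 / 3 :=
    prob_top_third hX (fun h => hmk h.symm) (fun h => hml h.symm) hkl
  have hEC : E ⊆ C := fun ω hω => ⟨hω.1.le, hω.2.le⟩
  have hCE : C ⊆ E ∪ ({ω | X k ω = X m ω} ∪ {ω | X l ω = X m ω}) := by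
    intro ω hω
    rcases lt_or_eq_of_le hω.1 with h1 | h1
    · rcases lt_or_eq_of_le hω.2 with h2 | h2
      · exact Or.inl ⟨h1, h2⟩
      · exact Or.inr (Or.inr h2)
    · exact Or.inr (Or.inl h1)
  have hties : P ({ω | X k ω = X m ω} ∪ {ω | X l ω = X m ω}) = 0 :=
    measure_union_null (tie_zero hX (fun h => hmk h.symm)) (tie_zero hX (fun h => hml h.symm))
  have hPE : P E = 1 / 3 := by
    apply le_antisymm
    · rw [← hPC]; exact measure_mono hEC
    · rw [← hPC]
      calc P C ≤ P (E ∪ ({ω | X k ω = X m ω} ∪ {ω | X l ω = X m ω})) := measure_mono hCE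
        _ ≤ P E + P ({ω | X k ω = X m ω} ∪ {ω | X l ω = X m ω}) := measure_union_le _ _
        _ = P E := by rw [hties, add_zero]
  have hsum : P D + P E = 1 := by
    rw [← hcompl]
    exact (measure_add_measure_compl hmD).trans measure_univ
  have h23 : (2 : ℝ≥0∞) / 3 + 1 / 3 = 1 := by
    rw [ENNReal.div_add_div_same]
    norm_num
    exact ENNReal.div_self (by norm_num) (by norm_num)
  rw [hPE] at hsum
  have := hsum.trans h23.symm
  rw [add_comm (P D), add_comm ((2:ℝ≥0∞)/3)] at this
  exact (ENNReal.add_right_inj (by norm_num)).mp this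


lemma toReal_half : ((1:ℝ≥0∞)/2).toReal = 1/2 := by
  rw [ENNReal.toReal_div]; norm_num

lemma toReal_third : ((1:ℝ≥0∞)/3).toReal = 1/3 := by
  rw [ENNReal.toReal_div]; norm_num

lemma toReal_twothirds : ((2:ℝ≥0∞)/3).toReal = 2/3 := by
  rw [ENNReal.toReal_div]; norm_num

lemma expect_rank (hX : IID1 X P) (i : Fin n) (hn : 1 ≤ n) :
    ∫ ω, rank1 X i ω ∂P = ((n:ℝ) + 1) / 2 := by
  have hmeas : ∀ j : Fin n, MeasurableSet {ω | X j ω ≤ X i ω} :=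
    fun j => measurableSet_le (hX.1 j) (hX.1 i)
  have hint : ∀ j : Fin n, Integrable (fun ω => if X j ω ≤ X i ω then (1:ℝ) else 0) P :=
    fun j => integrable_ite_one _ (hmeas j)
  have h1 : ∫ ω, rank1 X i ω ∂P
      = ∑ j : Fin n, (P {ω | X j ω ≤ X i ω}).toReal := by
    rw [show (fun ω => rank1 X i ω)
        = fun ω => ∑ j : Fin n, if X j ω ≤ X i ω then (1:ℝ) else 0 from rfl]
    rw [integral_finset_sum _ (fun j _ => hint j)]
    exact Finset.sum_congr rfl fun j _ => integral_ite_one _ (hmeas j)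
  rw [h1, ← Finset.add_sum_erase _ _ (Finset.mem_univ i)]
  have hii : {ω | X i ω ≤ X i ω} = Set.univ := by ext ω; simp
  have hval : ∀ j ∈ Finset.univ.erase i, (P {ω | X j ω ≤ X i ω}).toReal = 1/2 := by
    intro j hj
    rw [prob_le_half hX (Finset.ne_of_mem_erase hj).symm, toReal_half]
  rw [hii, measure_univ, ENNReal.toReal_one, Finset.sum_congr rfl hval, Finset.sum_const,
    Finset.card_erase_of_mem (Finset.mem_univ i), Finset.card_univ, Fintype.card_fin,
    nsmul_eq_mul, Nat.cast_sub hn]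
  push_cast
  ring

lemma expect_rr (hX : IID1 X P) (i : Fin n) (hn : 2 ≤ n) :
    ∫ ω, rank1 X i ω * (rank1 X i ω - 1) ∂P = ((n:ℝ) - 1) * ((n:ℝ) + 1) / 3 := by
  have hm2 : ∀ j k : Fin n, MeasurableSet {ω | X j ω ≤ X i ω ∧ X k ω ≤ X i ω} :=
    fun j k => (measurableSet_le (hX.1 j) (hX.1 i)).inter (measurableSet_le (hX.1 k) (hX.1 i))
  have hint2 : ∀ j k : Fin n,
      Integrable (fun ω => if X j ω ≤ X i ω ∧ X k ω ≤ X i ω then (1:ℝ) else 0) P :=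
    fun j k => integrable_ite_one _ (hm2 j k)
  have h1 : ∫ ω, rank1 X i ω * (rank1 X i ω - 1) ∂P
      = ∑ j : Fin n, ∑ k ∈ Finset.univ.erase j,
          (P {ω | X j ω ≤ X i ω ∧ X k ω ≤ X i ω}).toReal := by
    rw [show (fun ω => rank1 X i ω * (rank1 X i ω - 1))
        = fun ω => ∑ j : Fin n, ∑ k ∈ Finset.univ.erase j,
            (if X j ω ≤ X i ω ∧ X k ω ≤ X i ω then (1:ℝ) else 0) from
      funext (rank_mul_sub_one X i)]
    rw [integral_finset_sum _ (fun j _ =>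
      integrable_finset_sum _ (fun k _ => hint2 j k))]
    refine Finset.sum_congr rfl fun j _ => ?_
    rw [integral_finset_sum _ (fun k _ => hint2 j k)]
    exact Finset.sum_congr rfl fun k _ => integral_ite_one _ (hm2 j k)
  have hv_i : ∀ k ∈ Finset.univ.erase i,
      (P {ω | X i ω ≤ X i ω ∧ X k ω ≤ X i ω}).toReal = 1/2 := by
    intro k hk
    have : {ω | X i ω ≤ X i ω ∧ X k ω ≤ X i ω} = {ω | X k ω ≤ X i ω} := by
      ext ω; simp
    rw [this, prob_le_half hX (Finset.ne_of_mem_erase hk).symm, toReal_half]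
  have hv_ji : ∀ j ∈ Finset.univ.erase i,
      (P {ω | X j ω ≤ X i ω ∧ X i ω ≤ X i ω}).toReal = 1/2 := by
    intro j hj
    have : {ω | X j ω ≤ X i ω ∧ X i ω ≤ X i ω} = {ω | X j ω ≤ X i ω} := by
      ext ω; simp
    rw [this, prob_le_half hX (Finset.ne_of_mem_erase hj).symm, toReal_half]
  have hv_jk : ∀ j ∈ Finset.univ.erase i, ∀ k ∈ (Finset.univ.erase j).erase i,
      (P {ω | X j ω ≤ X i ω ∧ X k ω ≤ X i ω}).toReal = 1/3 := by
    intro j hj k hk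
    have hji : j ≠ i := Finset.ne_of_mem_erase hj
    have hki : k ≠ i := Finset.ne_of_mem_erase hk
    have hkj : k ≠ j := Finset.ne_of_mem_erase (Finset.mem_of_mem_erase hk)
    rw [prob_top_third hX hji hki (fun h => hkj h.symm), toReal_third]
  have hc1 : ((n - 1 : ℕ) : ℝ) = (n:ℝ) - 1 := by
    rw [Nat.cast_sub (by omega : 1 ≤ n)]; push_cast; ring
  have hc2 : ((n - 1 - 1 : ℕ) : ℝ) = (n:ℝ) - 2 := by
    rw [Nat.cast_sub (by omega : 1 ≤ n - 1), Nat.cast_sub (by omega : 1 ≤ n)]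
    push_cast; ring
  have houter : ∀ j ∈ Finset.univ.erase i,
      (∑ k ∈ Finset.univ.erase j, (P {ω | X j ω ≤ X i ω ∧ X k ω ≤ X i ω}).toReal)
        = 1/2 + ((n:ℝ) - 2)/3 := by
    intro j hj
    have hji : j ≠ i := Finset.ne_of_mem_erase hj
    have hmem : i ∈ Finset.univ.erase j :=
      Finset.mem_erase_of_ne_of_mem hji.symm (Finset.mem_univ i)
    rw [← Finset.add_sum_erase _ _ hmem, hv_ji j hj,
      Finset.sum_congr rfl (hv_jk j hj), Finset.sum_const,
      Finset.card_erase_of_mem hmem, Finset.card_erase_of_mem (Finset.mem_univ j),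
      Finset.card_univ, Fintype.card_fin, nsmul_eq_mul, hc2]
    ring
  rw [h1, ← Finset.add_sum_erase _ _ (Finset.mem_univ i),
    Finset.sum_congr rfl hv_i, Finset.sum_const,
    Finset.card_erase_of_mem (Finset.mem_univ i), Finset.card_univ, Fintype.card_fin,
    nsmul_eq_mul, Finset.sum_congr rfl houter, Finset.sum_const,
    Finset.card_erase_of_mem (Finset.mem_univ i), Finset.card_univ, Fintype.card_fin,
    nsmul_eq_mul, hc1]
  ring

lemma expect_max (hX : IID1 X P) (i j : Fin n) (hij : i ≠ j) (hn : 2 ≤ n) :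
    ∫ ω, max (rank1 X i ω) (rank1 X j ω) ∂P = (2 * (n:ℝ) + 2) / 3 := by
  have hmt : ∀ k : Fin n, MeasurableSet {ω | X k ω ≤ X i ω ∨ X k ω ≤ X j ω} :=
    fun k => (measurableSet_le (hX.1 k) (hX.1 i)).union (measurableSet_le (hX.1 k) (hX.1 j))
  have hintt : ∀ k : Fin n,
      Integrable (fun ω => if X k ω ≤ X i ω ∨ X k ω ≤ X j ω then (1:ℝ) else 0) P :=
    fun k => integrable_ite_one _ (hmt k)
  have h1 : ∫ ω, max (rank1 X i ω) (rank1 X j ω) ∂P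
      = ∑ k : Fin n, (P {ω | X k ω ≤ X i ω ∨ X k ω ≤ X j ω}).toReal := by
    rw [show (fun ω => max (rank1 X i ω) (rank1 X j ω))
        = fun ω => ∑ k : Fin n, (if X k ω ≤ X i ω ∨ X k ω ≤ X j ω then (1:ℝ) else 0) from
      funext (max_rank_eq X i j)]
    rw [integral_finset_sum _ (fun k _ => hintt k)]
    exact Finset.sum_congr rfl fun k _ => integral_ite_one _ (hmt k)
  have hvi : (P {ω | X i ω ≤ X i ω ∨ X i ω ≤ X j ω}).toReal = 1 := by
    have : {ω | X i ω ≤ X i ω ∨ X i ω ≤ X j ω} = Set.univ := by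
      ext ω; simp
    rw [this, measure_univ, ENNReal.toReal_one]
  have hvj : (P {ω | X j ω ≤ X i ω ∨ X j ω ≤ X j ω}).toReal = 1 := by
    have : {ω | X j ω ≤ X i ω ∨ X j ω ≤ X j ω} = Set.univ := by
      ext ω; simp
    rw [this, measure_univ, ENNReal.toReal_one]
  have hvk : ∀ k ∈ (Finset.univ.erase i).erase j,
      (P {ω | X k ω ≤ X i ω ∨ X k ω ≤ X j ω}).toReal = 2/3 := by
    intro k hk
    have hkj : k ≠ j := Finset.ne_of_mem_erase hk
    have hki : k ≠ i := Finset.ne_of_mem_erase (Finset.mem_of_mem_erase hk)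
    rw [prob_or_twothirds hX hij hki hkj, toReal_twothirds]
  have hmemj : j ∈ Finset.univ.erase i :=
    Finset.mem_erase_of_ne_of_mem hij.symm (Finset.mem_univ j)
  have hc2 : ((n - 1 - 1 : ℕ) : ℝ) = (n:ℝ) - 2 := by
    rw [Nat.cast_sub (by omega : 1 ≤ n - 1), Nat.cast_sub (by omega : 1 ≤ n)]
    push_cast; ring
  rw [h1, ← Finset.add_sum_erase _ _ (Finset.mem_univ i), hvi,
    ← Finset.add_sum_erase _ _ hmemj, hvj,
    Finset.sum_congr rfl hvk, Finset.sum_const,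
    Finset.card_erase_of_mem hmemj, Finset.card_erase_of_mem (Finset.mem_univ i),
    Finset.card_univ, Fintype.card_fin, nsmul_eq_mul, hc2]
  ring



end AuxLemmas

/-- For all `i, j ∈ {1,…,n}`: `E[I_{i,j}] = 1/6 − 1/(6n)` if `i = j`,
and `E[I_{i,j}] = −1/(6n)` if `i ≠ j`. -/
theorem stmt_3
    (n : ℕ) (hn : 2 ≤ n)
    (Ω : Type) [MeasurableSpace Ω]
    (P : Measure Ω) [IsProbabilityMeasure P]
    (X : Fin n → Ω → ℝ) (hX : IID1 X P) :
    ∀ i j : Fin n,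
      ∫ ω, I1 X i j ω ∂ P =
        if i = j then 1 / 6 - 1 / (6 * (n : ℝ)) else -(1 / (6 * (n : ℝ))) := by
  intro i j
  have hnR : (2:ℝ) ≤ (n:ℝ) := by exact_mod_cast hn
  have hn0 : (n:ℝ) ≠ 0 := by linarith
  have hn1 : (n:ℝ) + 1 ≠ 0 := by linarith
  have int_rr : ∀ a : Fin n, Integrable (fun ω => rank1 X a ω * (rank1 X a ω - 1)) P := by
    intro a
    rw [show (fun ω => rank1 X a ω * (rank1 X a ω - 1))
        = fun ω => ∑ j : Fin n, ∑ k ∈ Finset.univ.erase j,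
            (if X j ω ≤ X a ω ∧ X k ω ≤ X a ω then (1:ℝ) else 0) from
      funext (rank_mul_sub_one X a)]
    exact integrable_finset_sum _ (fun j' _ => integrable_finset_sum _ (fun k _ =>
      integrable_ite_one _ ((measurableSet_le (hX.1 j') (hX.1 a)).inter
        (measurableSet_le (hX.1 k) (hX.1 a)))))
  have int_max : Integrable (fun ω => max (rank1 X i ω) (rank1 X j ω)) P := by
    rw [show (fun ω => max (rank1 X i ω) (rank1 X j ω))
        = fun ω => ∑ k : Fin n, (if X k ω ≤ X i ω ∨ X k ω ≤ X j ω then (1:ℝ) else 0) from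
      funext (max_rank_eq X i j)]
    exact integrable_finset_sum _ (fun k _ => integrable_ite_one _
      ((measurableSet_le (hX.1 k) (hX.1 i)).union (measurableSet_le (hX.1 k) (hX.1 j))))
  have hsplit : ∫ ω, I1 X i j ω ∂P
      = (2 * (n:ℝ) + 1) / (6 * (n:ℝ))
        + (∫ ω, rank1 X i ω * (rank1 X i ω - 1) ∂P) / (2 * (n:ℝ) * ((n:ℝ) + 1))
        + (∫ ω, rank1 X j ω * (rank1 X j ω - 1) ∂P) / (2 * (n:ℝ) * ((n:ℝ) + 1))
        - (∫ ω, max (rank1 X i ω) (rank1 X j ω) ∂P) / ((n:ℝ) + 1) := by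
    simp only [I1]
    rw [integral_sub (f := fun ω => (2 * (n:ℝ) + 1) / (6 * (n:ℝ))
          + rank1 X i ω * (rank1 X i ω - 1) / (2 * (n:ℝ) * ((n:ℝ) + 1))
          + rank1 X j ω * (rank1 X j ω - 1) / (2 * (n:ℝ) * ((n:ℝ) + 1)))
        (g := fun ω => max (rank1 X i ω) (rank1 X j ω) / ((n:ℝ) + 1))
        (((integrable_const _).add ((int_rr i).div_const _)).add
          ((int_rr j).div_const _)) (int_max.div_const _),
      integral_add (f := fun ω => (2 * (n:ℝ) + 1) / (6 * (n:ℝ))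
          + rank1 X i ω * (rank1 X i ω - 1) / (2 * (n:ℝ) * ((n:ℝ) + 1)))
        (g := fun ω => rank1 X j ω * (rank1 X j ω - 1) / (2 * (n:ℝ) * ((n:ℝ) + 1)))
        ((integrable_const _).add ((int_rr i).div_const _)) ((int_rr j).div_const _),
      integral_add (f := fun _ => (2 * (n:ℝ) + 1) / (6 * (n:ℝ)))
        (g := fun ω => rank1 X i ω * (rank1 X i ω - 1) / (2 * (n:ℝ) * ((n:ℝ) + 1)))
        (integrable_const _) ((int_rr i).div_const _),
      integral_const, integral_div, integral_div, integral_div]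
    simp
  by_cases hij : i = j
  · subst hij
    simp only [max_self] at hsplit int_max ⊢
    rw [if_pos trivial]
    rw [hsplit, expect_rr hX i hn, expect_rank hX i (by omega)]
    field_simp
    ring
  · rw [if_neg hij, hsplit, expect_rr hX i hn, expect_rr hX j hn,
      expect_max hX i j hij hn]
    field_simp
    ring
end
end

section
/- There exists a constant C > 0 such that for every n ≥ 4: |E[(Ĩ_{1,2})² · Ĩ_{3,4}]| ≤ C/n, i.e. the third-order moment E[(Ĩ_{1,2})² Ĩ_{3,4}] (with the four indices 1,2,3,4 pairwise distinct) is O(n^{−1}). -/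
open MeasureTheory ProbabilityTheory Filter Finset Topology

noncomputable section

-- ### Auxiliary development ###

def nrk {n : ℕ} (x : Fin n → ℝ) (i : Fin n) : ℕ :=
  (Finset.univ.filter (fun j => x j ≤ x i)).card

lemma nrk_pos {n : ℕ} (x : Fin n → ℝ) (i : Fin n) : 1 ≤ nrk x i := by
  have : i ∈ Finset.univ.filter (fun j => x j ≤ x i) := by simp
  exact Finset.card_pos.mpr ⟨i, this⟩

lemma nrk_le {n : ℕ} (x : Fin n → ℝ) (i : Fin n) : nrk x i ≤ n := by
  simpa [nrk] using (Finset.card_filter_le Finset.univ (fun j => x j ≤ x i))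

lemma nrk_injective {n : ℕ} {x : Fin n → ℝ} (hx : Function.Injective x) :
    Function.Injective (nrk x) := by
  have key : ∀ i j, x i < x j → nrk x i < nrk x j := by
    intro i j hij
    apply Finset.card_lt_card
    constructor
    · intro k hk
      simp only [Finset.mem_filter, Finset.mem_univ, true_and] at hk ⊢
      exact le_trans hk (le_of_lt hij)
    · intro hsub
      have : j ∈ Finset.univ.filter (fun k => x k ≤ x j) := by simp
      have := hsub this
      simp only [Finset.mem_filter, Finset.mem_univ, true_and] at this
      exact absurd (lt_of_le_of_lt this hij) (lt_irrefl _)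
  intro i j hij
  by_contra hne
  rcases lt_trichotomy (x i) (x j) with h | h | h
  · exact absurd hij (key i j h).ne
  · exact hne (hx h)
  · exact absurd hij.symm (key j i h).ne

lemma nrk_image {n : ℕ} {x : Fin n → ℝ} (hx : Function.Injective x) :
    Finset.univ.image (nrk x) = Finset.Icc 1 n := by
  apply Finset.eq_of_subset_of_card_le
  · intro a ha
    simp only [Finset.mem_image, Finset.mem_univ, true_and] at ha
    obtain ⟨i, rfl⟩ := ha
    exact Finset.mem_Icc.mpr ⟨nrk_pos x i, nrk_le x i⟩
  · rw [Finset.card_image_of_injective _ (nrk_injective hx)]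
    simp [Nat.card_Icc]

lemma sum_nrk {n : ℕ} {x : Fin n → ℝ} (hx : Function.Injective x) (g : ℕ → ℝ) :
    ∑ i : Fin n, g (nrk x i) = ∑ a ∈ Finset.Icc 1 n, g a := by
  rw [← nrk_image hx, Finset.sum_image (fun i _ j _ h => nrk_injective hx h)]

lemma gauss1 (n : ℕ) : ∑ a ∈ Finset.Icc 1 n, (a : ℝ) = n * (n + 1) / 2 := by
  induction n with
  | zero => simp
  | succ m ih =>
    rw [Finset.sum_Icc_succ_top (by omega)]
    push_cast
    rw [ih]; ring

lemma gauss2 (n : ℕ) : ∑ a ∈ Finset.Icc 1 n, (a : ℝ) * ((a : ℝ) - 1)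
    = n * (n + 1) * (n - 1) / 3 := by
  induction n with
  | zero => simp
  | succ m ih =>
    rw [Finset.sum_Icc_succ_top (by omega)]
    push_cast
    rw [ih]; ring

lemma gaussM (n : ℕ) : ∑ a ∈ Finset.Icc 1 n, ∑ b ∈ Finset.Icc 1 n, ((max a b : ℕ) : ℝ)
    = n * (n + 1) * (4 * n - 1) / 6 := by
  induction n with
  | zero => simp
  | succ m ih =>
    have hrow : ∀ a ∈ Finset.Icc 1 m, ((max a (m+1) : ℕ) : ℝ) = (m : ℝ) + 1 := by
      intro a ha
      rw [max_eq_right (by simp at ha; omega)]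
      push_cast; ring
    have hcol : ∀ b ∈ Finset.Icc 1 m, ((max (m+1) b : ℕ) : ℝ) = (m : ℝ) + 1 := by
      intro b hb
      rw [max_eq_left (by simp at hb; omega)]
      push_cast; ring
    rw [Finset.sum_Icc_succ_top (by omega)]
    have : ∀ a ∈ Finset.Icc 1 m, ∑ b ∈ Finset.Icc 1 (m+1), ((max a b : ℕ) : ℝ)
        = (∑ b ∈ Finset.Icc 1 m, ((max a b : ℕ) : ℝ)) + ((m : ℝ) + 1) := by
      intro a ha
      rw [Finset.sum_Icc_succ_top (by omega), hrow a ha]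
    have hlast : ∑ b ∈ Finset.Icc 1 (m+1), ((max (m+1) b : ℕ) : ℝ)
        = (∑ b ∈ Finset.Icc 1 m, ((m : ℝ) + 1)) + ((m : ℝ) + 1) := by
      rw [Finset.sum_Icc_succ_top (by omega), Finset.sum_congr rfl hcol]
      simp
    rw [Finset.sum_congr rfl this, Finset.sum_add_distrib, hlast]
    simp only [Finset.sum_const, Nat.card_Icc, nsmul_eq_mul, max_self]
    rw [ih]
    push_cast
    ring

def ev {n : ℕ} : Fin n → (Fin n → ℝ) → ℝ := fun i x => x i

lemma rank1_ev {n : ℕ} (x : Fin n → ℝ) (i : Fin n) :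
    rank1 ev i x = ((nrk x i : ℕ) : ℝ) := by
  simp only [rank1, ev, nrk]
  rw [Finset.natCast_card_filter]
  exact Finset.sum_congr rfl fun j _ => by congr

lemma helper1 {n : ℕ} (c e d : ℝ) (q : Fin n → ℝ) (m : Fin n → Fin n → ℝ) :
    ∑ i : Fin n, ∑ j : Fin n, (c + q i + q j - m i j / d + e)
      = n * n * (c + e) + n * (∑ i : Fin n, q i) * 2 - (∑ i : Fin n, ∑ j : Fin n, m i j) / d := by
  simp only [Finset.sum_add_distrib, Finset.sum_sub_distrib, Finset.sum_const,
    Finset.card_univ, Fintype.card_fin, nsmul_eq_mul, ← Finset.sum_div, ← Finset.mul_sum]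
  ring

lemma helper2 {n : ℕ} (c e d : ℝ) (q r : Fin n → ℝ) :
    ∑ i : Fin n, (c + q i + q i - r i / d + e)
      = n * (c + e) + (∑ i : Fin n, q i) * 2 - (∑ i : Fin n, r i) / d := by
  simp only [Finset.sum_add_distrib, Finset.sum_sub_distrib, Finset.sum_const,
    Finset.card_univ, Fintype.card_fin, nsmul_eq_mul, ← Finset.sum_div]
  ring

set_option maxHeartbeats 1000000 in
lemma key_identity {n : ℕ} (hn : 1 ≤ n) {x : Fin n → ℝ} (hx : Function.Injective x) :
    ∑ p ∈ Finset.univ.offDiag, Itil1 (ev (n := n)) p.1 p.2 x = 0 := by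
  set N : ℝ := (n : ℝ) with hN
  have hN1 : (1 : ℝ) ≤ N := by rw [hN]; exact_mod_cast hn
  set R : Fin n → ℝ := fun i => rank1 ev i x with hRdef
  set f : Fin n → Fin n → ℝ := fun i j =>
    (2 * N + 1) / (6 * N) + R i * (R i - 1) / (2 * N * (N + 1))
      + R j * (R j - 1) / (2 * N * (N + 1)) - max (R i) (R j) / (N + 1)
      + 1 / (6 * N) with hf
  have hfI : ∀ i j : Fin n, f i j = I1 ev i j x + 1 / (6 * N) := by
    intro i j; simp [hf, I1, hRdef, hN]
  -- step 1: rewrite offDiag sum using f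
  have h1 : ∑ p ∈ Finset.univ.offDiag, Itil1 (ev (n := n)) p.1 p.2 x
      = ∑ p ∈ Finset.univ.offDiag, f p.1 p.2 := by
    apply Finset.sum_congr rfl
    intro p hp
    have hne : p.1 ≠ p.2 := (Finset.mem_offDiag.mp hp).2.2
    rw [Itil1, if_neg hne, hfI]
  -- step 2: offDiag sum = full sum minus diagonal
  have h2 : ∑ p ∈ Finset.univ.offDiag, f p.1 p.2
      = (∑ i : Fin n, ∑ j : Fin n, f i j) - ∑ i : Fin n, f i i := by
    have hu : (Finset.univ (α := Fin n)).diag ∪ Finset.univ.offDiag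
        = Finset.univ ×ˢ Finset.univ := Finset.diag_union_offDiag _
    have hdisj := Finset.disjoint_diag_offDiag (Finset.univ (α := Fin n))
    have := Finset.sum_union (f := fun p : Fin n × Fin n => f p.1 p.2) hdisj
    rw [hu] at this
    rw [Finset.sum_product] at this
    rw [Finset.sum_diag] at this
    linarith [this]
  -- aggregate sums
  have hR' : ∀ i, R i = ((nrk x i : ℕ) : ℝ) := fun i => rank1_ev x i
  have hA1 : ∑ i : Fin n, R i = N * (N + 1) / 2 := by
    calc ∑ i : Fin n, R i = ∑ i : Fin n, ((nrk x i : ℕ) : ℝ) := by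
          exact Finset.sum_congr rfl fun i _ => hR' i
      _ = ∑ a ∈ Finset.Icc 1 n, (a : ℝ) := sum_nrk hx _
      _ = N * (N + 1) / 2 := gauss1 n
  have hA2 : ∑ i : Fin n, R i * (R i - 1) = N * (N + 1) * (N - 1) / 3 := by
    have e2 : ∑ i : Fin n, ((nrk x i : ℕ) : ℝ) * (((nrk x i : ℕ) : ℝ) - 1)
        = ∑ a ∈ Finset.Icc 1 n, (a : ℝ) * ((a : ℝ) - 1) :=
      sum_nrk hx (fun a : ℕ => (a : ℝ) * ((a : ℝ) - 1))
    rw [Finset.sum_congr rfl (fun i _ => by rw [hR' i] : ∀ i ∈ Finset.univ,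
      R i * (R i - 1) = ((nrk x i : ℕ) : ℝ) * (((nrk x i : ℕ) : ℝ) - 1)), e2, gauss2 n]
  have hM : ∑ i : Fin n, ∑ j : Fin n, max (R i) (R j) = N * (N + 1) * (4 * N - 1) / 6 := by
    have e3 : ∑ i : Fin n, ∑ j : Fin n, ((max (nrk x i) (nrk x j) : ℕ) : ℝ)
        = ∑ a ∈ Finset.Icc 1 n, ∑ j : Fin n, ((max a (nrk x j) : ℕ) : ℝ) :=
      sum_nrk hx (fun a : ℕ => ∑ j : Fin n, ((max a (nrk x j) : ℕ) : ℝ))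
    have e4 : ∑ i : Fin n, ∑ j : Fin n, max (R i) (R j)
        = ∑ i : Fin n, ∑ j : Fin n, ((max (nrk x i) (nrk x j) : ℕ) : ℝ) := by
      apply Finset.sum_congr rfl; intro i _
      apply Finset.sum_congr rfl; intro j _
      rw [hR' i, hR' j]; exact (Nat.cast_max _ _).symm
    rw [e4, e3, Finset.sum_congr rfl
      (fun a _ => sum_nrk hx (fun b => ((max a b : ℕ) : ℝ))), gaussM n]
  -- expand the double sum
  have hcard : (Finset.univ (α := Fin n)).card = n := by simp
  have h3 : ∑ i : Fin n, ∑ j : Fin n, f i j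
      = N * N * ((2 * N + 1) / (6 * N) + 1 / (6 * N))
        + N * (∑ i : Fin n, R i * (R i - 1) / (2 * N * (N + 1))) * 2
        - (∑ i : Fin n, ∑ j : Fin n, max (R i) (R j)) / (N + 1) := by
    have := helper1 (n := n) ((2 * N + 1) / (6 * N)) (1 / (6 * N)) (N + 1)
      (fun i => R i * (R i - 1) / (2 * N * (N + 1))) (fun i j => max (R i) (R j))
    simp only [hf]
    rw [this, hN]
  have h4 : ∑ i : Fin n, f i i
      = N * ((2 * N + 1) / (6 * N) + 1 / (6 * N))
        + (∑ i : Fin n, R i * (R i - 1) / (2 * N * (N + 1))) * 2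
        - (∑ i : Fin n, R i) / (N + 1) := by
    have := helper2 (n := n) ((2 * N + 1) / (6 * N)) (1 / (6 * N)) (N + 1)
      (fun i => R i * (R i - 1) / (2 * N * (N + 1))) R
    simp only [hf, max_self]
    rw [← this, hN]
  have hq : ∑ i : Fin n, R i * (R i - 1) / (2 * N * (N + 1))
      = (N * (N + 1) * (N - 1) / 3) / (2 * N * (N + 1)) := by
    rw [← Finset.sum_div, hA2]
  rw [h1, h2, h3, h4, hq, hA1, hM]
  have hNpos : (0:ℝ) < N := by linarith
  field_simp
  ring

-- bound
lemma itil_bound {n : ℕ} (hn : 1 ≤ n) (x : Fin n → ℝ) (i j : Fin n) :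
    |Itil1 (ev (n := n)) i j x| ≤ 4 := by
  have hN1 : (1 : ℝ) ≤ (n : ℝ) := by exact_mod_cast hn
  have hb : ∀ k : Fin n, 1 ≤ rank1 ev k x ∧ rank1 ev k x ≤ (n : ℝ) := by
    intro k
    rw [rank1_ev]
    exact ⟨by exact_mod_cast nrk_pos x k, by exact_mod_cast nrk_le x k⟩
  set R1 := rank1 ev i x with hR1
  set R2 := rank1 ev j x with hR2
  obtain ⟨h11, h12⟩ := hb i
  obtain ⟨h21, h22⟩ := hb j
  set N := (n : ℝ)
  have hA0 : (0:ℝ) ≤ (2 * N + 1) / (6 * N) := by positivity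
  have hA1 : (2 * N + 1) / (6 * N) ≤ 1 := by
    rw [div_le_one (by positivity)]; linarith
  have hB10 : (0:ℝ) ≤ R1 * (R1 - 1) / (2 * N * (N + 1)) := by
    apply div_nonneg (by nlinarith) (by positivity)
  have hB11 : R1 * (R1 - 1) / (2 * N * (N + 1)) ≤ 1 := by
    rw [div_le_one (by positivity)]; nlinarith
  have hB20 : (0:ℝ) ≤ R2 * (R2 - 1) / (2 * N * (N + 1)) := by
    apply div_nonneg (by nlinarith) (by positivity)
  have hB21 : R2 * (R2 - 1) / (2 * N * (N + 1)) ≤ 1 := by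
    rw [div_le_one (by positivity)]; nlinarith
  have hC0 : (0:ℝ) ≤ max R1 R2 / (N + 1) := by
    apply div_nonneg (le_trans (by linarith) (le_max_left _ _)) (by positivity)
  have hC1 : max R1 R2 / (N + 1) ≤ 1 := by
    rw [div_le_one (by positivity)]
    exact max_le (by linarith) (by linarith)
  have hD0 : (0:ℝ) ≤ 1 / (6 * N) := by positivity
  have hD1 : 1 / (6 * N) ≤ 1 / 6 := by
    rw [div_le_div_iff₀ (by positivity) (by norm_num)]; linarith
  rw [Itil1]
  unfold I1
  rw [← hR1, ← hR2]
  split <;> (rw [abs_le]; constructor <;> linarith)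

-- measurability
lemma meas_rank1 {n : ℕ} (i : Fin n) : Measurable (fun x : Fin n → ℝ => rank1 ev i x) := by
  apply Finset.measurable_sum
  intro j _
  exact Measurable.ite (measurableSet_le (show Measurable (ev (n := n) j) from measurable_pi_apply j)
    (show Measurable (ev (n := n) i) from measurable_pi_apply i)) measurable_const measurable_const

lemma meas_itil {n : ℕ} (i j : Fin n) :
    Measurable (fun x : Fin n → ℝ => Itil1 ev i j x) := by
  have hI : Measurable (fun x : Fin n → ℝ => I1 ev i j x) := by
    apply Measurable.sub
    · apply Measurable.add
      apply Measurable.add measurable_const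
      · exact ((meas_rank1 i).mul ((meas_rank1 i).sub measurable_const)).div measurable_const
      · exact ((meas_rank1 j).mul ((meas_rank1 j).sub measurable_const)).div measurable_const
    · exact ((meas_rank1 i).max (meas_rank1 j)).div measurable_const
  unfold Itil1
  by_cases h : i = j
  · subst h
    simp only [if_true, reduceIte]
    exact hI.sub measurable_const
  · simp only [h, if_false, reduceIte]
    exact hI.add measurable_const

-- composition with permutation
lemma rank1_comp {n : ℕ} (σ : Equiv.Perm (Fin n)) (x : Fin n → ℝ) (i : Fin n) :
    rank1 ev i (x ∘ σ) = rank1 ev (σ i) x := by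
  unfold rank1 ev
  exact Equiv.sum_comp σ (fun j => if x j ≤ x (σ i) then (1:ℝ) else 0)

lemma itil_comp {n : ℕ} (σ : Equiv.Perm (Fin n)) (x : Fin n → ℝ) (i j : Fin n) :
    Itil1 ev i j (x ∘ σ) = Itil1 ev (σ i) (σ j) x := by
  simp only [Itil1, I1, rank1_comp, EmbeddingLike.apply_eq_iff_eq]

-- permutation construction
lemma exists_perm {n : ℕ} {a b c d c' d' : Fin n}
    (hab : a ≠ b) (hcd : c ≠ d) (hca : c ≠ a) (hcb : c ≠ b) (hda : d ≠ a) (hdb : d ≠ b)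
    (hcd' : c' ≠ d') (hca' : c' ≠ a) (hcb' : c' ≠ b) (hda' : d' ≠ a) (hdb' : d' ≠ b) :
    ∃ σ : Equiv.Perm (Fin n), σ a = a ∧ σ b = b ∧ σ c' = c ∧ σ d' = d := by
  set s1 := Equiv.swap c' c with hs1
  set u := s1 d' with hu
  refine ⟨(Equiv.swap u d) * s1, ?_, ?_, ?_, ?_⟩
  · have h1 : s1 a = a := Equiv.swap_apply_of_ne_of_ne hca'.symm hca.symm
    have hu' : u = d' ∨ u = c' := by
      rcases eq_or_ne d' c with h | h
      · right; rw [hu, hs1, h]; exact Equiv.swap_apply_right c' c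
      · left; exact Equiv.swap_apply_of_ne_of_ne hcd'.symm h
    have h2 : a ≠ u := by rcases hu' with h | h <;> rw [h] <;> [exact hda'.symm; exact hca'.symm]
    simp only [Equiv.Perm.mul_apply, h1]
    exact Equiv.swap_apply_of_ne_of_ne h2 hda.symm
  · have h1 : s1 b = b := Equiv.swap_apply_of_ne_of_ne hcb'.symm hcb.symm
    have hu' : u = d' ∨ u = c' := by
      rcases eq_or_ne d' c with h | h
      · right; rw [hu, hs1, h]; exact Equiv.swap_apply_right c' c
      · left; exact Equiv.swap_apply_of_ne_of_ne hcd'.symm h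
    have h2 : b ≠ u := by rcases hu' with h | h <;> rw [h] <;> [exact hdb'.symm; exact hcb'.symm]
    simp only [Equiv.Perm.mul_apply, h1]
    exact Equiv.swap_apply_of_ne_of_ne h2 hdb.symm
  · have h1 : s1 c' = c := Equiv.swap_apply_left c' c
    have h2 : c ≠ u := by
      rw [hu]; intro h
      exact hcd' (s1.injective (h1.trans h).symm).symm
    simp only [Equiv.Perm.mul_apply, h1]
    exact Equiv.swap_apply_of_ne_of_ne h2 hcd
  · simp only [Equiv.Perm.mul_apply, ← hu]
    exact Equiv.swap_apply_left u d

lemma atomless_of_cont (ν : Measure ℝ) [IsProbabilityMeasure ν]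
    (hc : Continuous fun t => (ν (Set.Iic t)).toReal) (t : ℝ) : ν {t} = 0 := by
  have hfin : ∀ s : Set ℝ, ν s ≠ ⊤ := fun s => measure_ne_top ν s
  have key : ∀ s < t, (ν {t}).toReal ≤ (ν (Set.Iic t)).toReal - (ν (Set.Iic s)).toReal := by
    intro s hs
    have hsub : Set.Iic s ⊆ Set.Iic t := Set.Iic_subset_Iic.mpr hs.le
    have hdiff : ν (Set.Iic t \ Set.Iic s) = ν (Set.Iic t) - ν (Set.Iic s) :=
      measure_diff hsub measurableSet_Iic.nullMeasurableSet (hfin _)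
    have hmem : {t} ⊆ Set.Iic t \ Set.Iic s := by
      intro y hy
      rw [Set.mem_singleton_iff] at hy
      subst hy
      exact ⟨Set.mem_Iic.mpr le_rfl, fun h => absurd (Set.mem_Iic.mp h) (not_le.mpr hs)⟩
    have h1 : (ν {t}).toReal ≤ (ν (Set.Iic t \ Set.Iic s)).toReal :=
      ENNReal.toReal_mono (hfin _) (measure_mono hmem)
    rw [hdiff, ENNReal.toReal_sub_of_le (measure_mono hsub) (hfin _)] at h1
    exact h1
  have hlim : Tendsto (fun s => (ν (Set.Iic t)).toReal - (ν (Set.Iic s)).toReal)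
      (𝓝[<] t) (𝓝 0) := by
    have := (hc.tendsto t).mono_left (nhdsWithin_le_nhds (s := Set.Iio t))
    have h2 := Tendsto.sub (tendsto_const_nhds (x := (ν (Set.Iic t)).toReal)
      (f := 𝓝[<] t)) this
    simpa using h2
  have hle : (ν {t}).toReal ≤ 0 := by
    apply ge_of_tendsto hlim
    exact eventually_nhdsWithin_of_forall (fun s hs => key s hs)
  have h0 : (ν {t}).toReal = 0 := le_antisymm hle ENNReal.toReal_nonneg
  exact (ENNReal.toReal_eq_zero_iff _).mp h0 |>.resolve_right (hfin _)

lemma joint_law {Ω : Type} [MeasurableSpace Ω] {n : ℕ} (P : Measure Ω)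
    [IsProbabilityMeasure P] (X : Fin n → Ω → ℝ) (hmeas : ∀ i, Measurable (X i))
    (hindep : iIndepFun X P) :
    Measure.map (fun ω (i : Fin n) => X i ω) P
      = Measure.pi (fun i => Measure.map (X i) P) := by
  haveI : ∀ i, IsProbabilityMeasure (Measure.map (X i) P) :=
    fun i => Measure.isProbabilityMeasure_map (hmeas i).aemeasurable
  refine (Measure.pi_eq fun s hs => ?_).symm
  rw [Measure.map_apply (measurable_pi_lambda _ hmeas) (MeasurableSet.univ_pi hs)]
  have hpre : (fun ω (i : Fin n) => X i ω) ⁻¹' (Set.univ.pi s)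
      = ⋂ i ∈ (Finset.univ : Finset (Fin n)), X i ⁻¹' s i := by
    ext ω; simp [Set.mem_pi]
  rw [hpre, hindep.measure_inter_preimage_eq_mul Finset.univ (fun i _ => hs i)]
  exact Finset.prod_congr rfl fun i _ =>
    (Measure.map_apply (hmeas i) (hs i)).symm

lemma ties_null {Ω : Type} [MeasurableSpace Ω] {n : ℕ} (P : Measure Ω)
    [IsProbabilityMeasure P] (X : Fin n → Ω → ℝ) (hmeas : ∀ i, Measurable (X i))
    (hindep : iIndepFun X P)
    (hatomless : ∀ i : Fin n, ∀ t : ℝ, Measure.map (X i) P {t} = 0)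
    {i j : Fin n} (hij : i ≠ j) : P {ω | X i ω = X j ω} = 0 := by
  have hIF : IndepFun (X i) (X j) P := hindep.indepFun hij
  have hmap : Measure.map (fun ω => (X i ω, X j ω)) P
      = (Measure.map (X i) P).prod (Measure.map (X j) P) :=
    (indepFun_iff_map_prod_eq_prod_map_map (hmeas i).aemeasurable
      (hmeas j).aemeasurable).mp hIF
  have hdiag : MeasurableSet {p : ℝ × ℝ | p.1 = p.2} :=
    measurableSet_eq_fun measurable_fst measurable_snd
  have : P {ω | X i ω = X j ω}
      = (Measure.map (fun ω => (X i ω, X j ω)) P) {p : ℝ × ℝ | p.1 = p.2} := by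
    rw [Measure.map_apply ((hmeas i).prodMk (hmeas j)) hdiag]
    rfl
  rw [this, hmap, Measure.prod_apply hdiag]
  have : ∀ a : ℝ, (Measure.map (X j) P) (Prod.mk a ⁻¹' {p : ℝ × ℝ | p.1 = p.2}) = 0 := by
    intro a
    have : Prod.mk a ⁻¹' {p : ℝ × ℝ | p.1 = p.2} = {a} := by
      ext y; simp [eq_comm]
    rw [this]
    exact hatomless j a
  simp only [this, lintegral_zero]

set_option maxHeartbeats 800000 in
lemma main_bound {n : ℕ} (hn : 4 ≤ n) (ν : Measure ℝ) [IsProbabilityMeasure ν]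
    (hinj : ∀ᵐ x ∂(Measure.pi fun _ : Fin n => ν), Function.Injective x)
    {a b c d : Fin n} (hab : a ≠ b) (hcd : c ≠ d) (hca : c ≠ a) (hcb : c ≠ b)
    (hda : d ≠ a) (hdb : d ≠ b) :
    |∫ x, (Itil1 (ev (n := n)) a b x) ^ 2 * Itil1 ev c d x
        ∂(Measure.pi fun _ : Fin n => ν)| ≤ 2048 / n := by
  have hn1 : 1 ≤ n := by omega
  set π : Measure (Fin n → ℝ) := Measure.pi fun _ : Fin n => ν with hπ
  haveI : IsProbabilityMeasure π := by rw [hπ]; infer_instance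
  set g : Fin n × Fin n → (Fin n → ℝ) → ℝ :=
    fun p x => (Itil1 ev a b x) ^ 2 * Itil1 ev p.1 p.2 x with hg
  have hgm : ∀ p, Measurable (g p) := fun p =>
    ((meas_itil a b).pow_const 2).mul (meas_itil p.1 p.2)
  have hgb : ∀ p x, |g p x| ≤ 64 := by
    intro p x
    rw [hg]
    simp only [abs_mul, abs_pow]
    have h1 := itil_bound hn1 x a b
    have h2 := itil_bound hn1 x p.1 p.2
    have h3 : |Itil1 (ev (n := n)) a b x| ^ 2 ≤ 16 := by nlinarith [abs_nonneg (Itil1 (ev (n := n)) a b x)]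
    nlinarith [abs_nonneg (Itil1 (ev (n := n)) p.1 p.2 x), pow_nonneg (abs_nonneg (Itil1 (ev (n := n)) a b x)) 2]
  have hgi : ∀ p, Integrable (g p) π := fun p =>
    ⟨(hgm p).aestronglyMeasurable, HasFiniteIntegral.of_bounded (C := 64)
      (ae_of_all _ fun x => by simpa [Real.norm_eq_abs] using hgb p x)⟩
  set s : Finset (Fin n × Fin n) := ((Finset.univ : Finset (Fin n)) \ {a, b}).offDiag
    with hs
  -- each integral over s equals the (c,d) one
  have hperm : ∀ p ∈ s, ∫ x, g p x ∂π = ∫ x, g (c, d) x ∂π := by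
    intro p hp
    rw [hs, Finset.mem_offDiag] at hp
    obtain ⟨hp1, hp2, hp12⟩ := hp
    simp only [Finset.mem_sdiff, Finset.mem_insert, Finset.mem_singleton] at hp1 hp2
    have hca' : p.1 ≠ a := fun h => hp1.2 (Or.inl h)
    have hcb' : p.1 ≠ b := fun h => hp1.2 (Or.inr h)
    have hda' : p.2 ≠ a := fun h => hp2.2 (Or.inl h)
    have hdb' : p.2 ≠ b := fun h => hp2.2 (Or.inr h)
    obtain ⟨σ, hσa, hσb, hσc, hσd⟩ :=
      exists_perm hab hcd hca hcb hda hdb hp12 hca' hcb' hda' hdb'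
    set T := MeasurableEquiv.piCongrLeft (fun _ : Fin n => ℝ) σ.symm with hT
    have hTpres : MeasurePreserving T π π :=
      measurePreserving_piCongrLeft (fun _ : Fin n => ν) σ.symm
    have hTx : ∀ x : Fin n → ℝ, T x = x ∘ σ := by
      intro x
      funext i
      have := MeasurableEquiv.piCongrLeft_apply_apply σ.symm (β := fun _ : Fin n => ℝ)
        x (σ i)
      simpa using this
    calc ∫ x, g p x ∂π = ∫ x, g p (T x) ∂π :=
          (hTpres.integral_comp (MeasurableEquiv.measurableEmbedding T) (g p)).symm
      _ = ∫ x, g (c, d) x ∂π := by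
          apply integral_congr_ae
          apply ae_of_all
          intro x
          rw [hg]
          simp only [hTx x, itil_comp, hσa, hσb]
          rw [show σ p.1 = c from by rw [← hσc], show σ p.2 = d from by rw [← hσd]]
  -- cardinalities
  have hcard_ab : ((Finset.univ : Finset (Fin n)) \ {a, b}).card = n - 2 := by
    rw [Finset.card_sdiff_of_subset (Finset.subset_univ _), Finset.card_pair hab,
      Finset.card_univ, Fintype.card_fin]
  have hcard_s : s.card = (n - 2) * (n - 3) := by
    rw [hs, Finset.offDiag_card, hcard_ab]
    have h2 : 2 ≤ n := by omega
    obtain ⟨m, rfl⟩ : ∃ m, n = m + 4 := ⟨n - 4, by omega⟩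
    have h4 : m + 4 - 2 = m + 2 := by omega
    have h3 : m + 4 - 3 = m + 1 := by omega
    rw [h4, h3]
    apply Nat.sub_eq_of_eq_add
    ring
  -- sum over s
  have hsum1 : ∑ p ∈ s, ∫ x, g p x ∂π = (s.card : ℝ) * ∫ x, g (c, d) x ∂π := by
    rw [Finset.sum_congr rfl hperm, Finset.sum_const, nsmul_eq_mul]
  have hsum2 : ∑ p ∈ s, ∫ x, g p x ∂π = ∫ x, ∑ p ∈ s, g p x ∂π :=
    (integral_finset_sum s fun p _ => hgi p).symm
  -- a.e. bound on the sum
  have hsub : s ⊆ Finset.univ.offDiag := Finset.offDiag_mono (Finset.subset_univ _)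
  have hbadcard : (Finset.univ.offDiag \ s).card ≤ 4 * n := by
    rw [Finset.card_sdiff_of_subset hsub, Finset.offDiag_card, hcard_s]
    simp only [Finset.card_univ, Fintype.card_fin]
    obtain ⟨m, rfl⟩ : ∃ m, n = m + 4 := ⟨n - 4, by omega⟩
    have h1 : m + 4 - 2 = m + 2 := by omega
    have h2 : m + 4 - 3 = m + 1 := by omega
    rw [h1, h2]
    have : (m + 4) * (m + 4) - (m + 4) - (m + 2) * (m + 1)
        = (m + 4) * (m + 4) - ((m + 4) + (m + 2) * (m + 1)) := by omega
    rw [this, Nat.sub_le_iff_le_add]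
    nlinarith
  have haebound : ∀ᵐ x ∂π, ‖∑ p ∈ s, g p x‖ ≤ 256 * n := by
    filter_upwards [hinj] with x hx
    have hkey := key_identity hn1 hx
    have hsplit : ∑ p ∈ Finset.univ.offDiag \ s, Itil1 (ev (n := n)) p.1 p.2 x
        = ∑ p ∈ Finset.univ.offDiag, Itil1 (ev (n := n)) p.1 p.2 x
          - ∑ p ∈ s, Itil1 (ev (n := n)) p.1 p.2 x :=
      Finset.sum_sdiff_eq_sub hsub
    have hseq : ∑ p ∈ s, g p x
        = (Itil1 ev a b x) ^ 2 * ∑ p ∈ s, Itil1 (ev (n := n)) p.1 p.2 x := by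
      rw [hg, Finset.mul_sum]
    have hsval : ∑ p ∈ s, Itil1 (ev (n := n)) p.1 p.2 x
        = - ∑ p ∈ Finset.univ.offDiag \ s, Itil1 (ev (n := n)) p.1 p.2 x := by
      rw [hsplit, hkey]; ring
    rw [hseq, hsval, Real.norm_eq_abs, abs_mul, abs_neg]
    have h1 : |Itil1 (ev (n := n)) a b x| ^ 2 ≤ 16 := by
      nlinarith [itil_bound hn1 x a b, abs_nonneg (Itil1 (ev (n := n)) a b x)]
    have h2 : |∑ p ∈ Finset.univ.offDiag \ s, Itil1 (ev (n := n)) p.1 p.2 x|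
        ≤ 16 * n := by
      calc |∑ p ∈ Finset.univ.offDiag \ s, Itil1 (ev (n := n)) p.1 p.2 x|
          ≤ ∑ p ∈ Finset.univ.offDiag \ s, |Itil1 (ev (n := n)) p.1 p.2 x| :=
            Finset.abs_sum_le_sum_abs _ _
        _ ≤ ∑ _p ∈ Finset.univ.offDiag \ s, (4:ℝ) :=
            Finset.sum_le_sum fun p _ => itil_bound hn1 x p.1 p.2
        _ = ((Finset.univ.offDiag \ s).card : ℝ) * 4 := by
            rw [Finset.sum_const, nsmul_eq_mul]
        _ ≤ (4 * n : ℝ) * 4 := by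
            have : ((Finset.univ.offDiag \ s).card : ℝ) ≤ 4 * n := by
              exact_mod_cast hbadcard
            linarith
        _ = 16 * n := by ring
    have habs2 : |(Itil1 (ev (n := n)) a b x) ^ 2| = |Itil1 (ev (n := n)) a b x| ^ 2 := by
      rw [abs_pow]
    rw [habs2]
    have hnn : (0:ℝ) ≤ |∑ p ∈ Finset.univ.offDiag \ s, Itil1 (ev (n := n)) p.1 p.2 x| :=
      abs_nonneg _
    nlinarith [abs_nonneg (Itil1 (ev (n := n)) a b x), sq_nonneg (|Itil1 (ev (n := n)) a b x|)]
  have hintbound : ‖∫ x, ∑ p ∈ s, g p x ∂π‖ ≤ 256 * n := by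
    have := norm_integral_le_of_norm_le_const haebound
    simpa using this
  -- combining
  set J := ∫ x, g (c, d) x ∂π with hJ
  have hfinal : ((n : ℝ) - 2) * ((n : ℝ) - 3) * |J| ≤ 256 * n := by
    have hcast : (s.card : ℝ) = ((n : ℝ) - 2) * ((n : ℝ) - 3) := by
      rw [hcard_s]
      push_cast [Nat.cast_sub (by omega : 2 ≤ n), Nat.cast_sub (by omega : 3 ≤ n)]
      ring
    have : |(s.card : ℝ) * J| ≤ 256 * n := by
      rw [← hsum1, hsum2]
      simpa [Real.norm_eq_abs] using hintbound
    rw [abs_mul, abs_of_nonneg (by positivity : (0:ℝ) ≤ (s.card : ℝ))] at this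
    rw [← hcast]
    exact this
  have hnR : (4:ℝ) ≤ (n:ℝ) := by exact_mod_cast hn
  have hJ0 : (0:ℝ) ≤ |J| := abs_nonneg _
  have goal : |J| ≤ 2048 / n := by
    rw [le_div_iff₀ (by linarith : (0:ℝ) < (n:ℝ))]
    have h8 : (n:ℝ) * (n:ℝ) ≤ 8 * (((n:ℝ) - 2) * ((n:ℝ) - 3)) := by nlinarith
    nlinarith [mul_le_mul_of_nonneg_right h8 hJ0, hfinal]
  exact goal

lemma measurableSet_injective {n : ℕ} :
    MeasurableSet {x : Fin n → ℝ | Function.Injective x} := by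
  have heq : {x : Fin n → ℝ | Function.Injective x}
      = ⋂ (i : Fin n), ⋂ (j : Fin n), {x : Fin n → ℝ | x i = x j → i = j} := by
    ext x
    simp only [Set.mem_setOf_eq, Set.mem_iInter, Function.Injective]
  rw [heq]
  apply MeasurableSet.iInter; intro i
  apply MeasurableSet.iInter; intro j
  by_cases hij : i = j
  · subst hij
    have : {x : Fin n → ℝ | x i = x i → i = i} = Set.univ := by
      ext x; simp
    rw [this]; exact MeasurableSet.univ
  · have : {x : Fin n → ℝ | x i = x j → i = j} = {x : Fin n → ℝ | x i = x j}ᶜ := by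
      ext x; simp only [Set.mem_setOf_eq, Set.mem_compl_iff]
      constructor
      · intro h hx; exact hij (h hx)
      · intro h hx; exact absurd hx h
    rw [this]
    exact (measurableSet_eq_fun (measurable_pi_apply i) (measurable_pi_apply j)).compl


/-- There is a constant `C > 0` such that for every `n ≥ 4` and every
model as in the setup, `|E[(Ĩ_{1,2})²·Ĩ_{3,4}]| ≤ C/n` (the indices `1,2,3,4` being
pairwise distinct). -/
theorem stmt_13 :
    ∃ C > (0 : ℝ), ∀ (n : ℕ) (hn : 4 ≤ n),
      ∀ (Ω : Type) [MeasurableSpace Ω] (P : Measure Ω), IsProbabilityMeasure P →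
      ∀ X : Fin n → Ω → ℝ, IID1 X P →
      |∫ ω, (Itil1 X ⟨0, by omega⟩ ⟨1, by omega⟩ ω) ^ 2 *
          Itil1 X ⟨2, by omega⟩ ⟨3, by omega⟩ ω ∂ P| ≤ C / n := by
  refine ⟨2048, by norm_num, ?_⟩
  intro n hn Ω mΩ P hP X hX
  obtain ⟨hmeas, hindep, hident, hcdf⟩ := hX
  haveI := hP
  set a : Fin n := ⟨0, by omega⟩
  set b : Fin n := ⟨1, by omega⟩
  set c : Fin n := ⟨2, by omega⟩
  set d : Fin n := ⟨3, by omega⟩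
  have hab : a ≠ b := by simp [a, b, Fin.ext_iff]
  have hcd : c ≠ d := by simp [c, d, Fin.ext_iff]
  have hca : c ≠ a := by simp [c, a, Fin.ext_iff]
  have hcb : c ≠ b := by simp [c, b, Fin.ext_iff]
  have hda : d ≠ a := by simp [d, a, Fin.ext_iff]
  have hdb : d ≠ b := by simp [d, b, Fin.ext_iff]
  set ν : Measure ℝ := Measure.map (X a) P with hν
  haveI : IsProbabilityMeasure ν := Measure.isProbabilityMeasure_map (hmeas a).aemeasurable
  -- atomlessness
  have hatomless : ∀ i : Fin n, ∀ t : ℝ, Measure.map (X i) P {t} = 0 := by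
    intro i
    haveI : IsProbabilityMeasure (Measure.map (X i) P) :=
      Measure.isProbabilityMeasure_map (hmeas i).aemeasurable
    apply atomless_of_cont
    have hIic : ∀ t : ℝ, Measure.map (X i) P (Set.Iic t) = P {ω | X i ω ≤ t} := by
      intro t
      rw [Measure.map_apply (hmeas i) measurableSet_Iic]
      rfl
    simp only [hIic]
    exact hcdf i
  -- joint law
  set Y : Ω → (Fin n → ℝ) := fun ω i => X i ω with hY
  have hYm : Measurable Y := measurable_pi_lambda _ hmeas
  have hjoint : Measure.map Y P = Measure.pi (fun _ : Fin n => ν) := by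
    rw [hY, joint_law P X hmeas hindep]
    congr 1
    funext i
    rw [hν]
    exact hident i a
  -- a.e. injectivity
  have haeP : ∀ᵐ ω ∂P, Function.Injective (Y ω) := by
    have hpair : ∀ i j : Fin n, i ≠ j → ∀ᵐ ω ∂P, X i ω ≠ X j ω := by
      intro i j hij
      have h0 := ties_null P X hmeas hindep hatomless hij
      rw [ae_iff]
      convert h0 using 2
      ext ω
      simp [not_not]
    have hall : ∀ᵐ ω ∂P, ∀ i j : Fin n, i ≠ j → X i ω ≠ X j ω := by
      rw [ae_all_iff]
      intro i
      rw [ae_all_iff]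
      intro j
      by_cases hij : i = j
      · subst hij
        filter_upwards with ω h
        exact absurd rfl h
      · filter_upwards [hpair i j hij] with ω h _
        exact h
    filter_upwards [hall] with ω h
    intro i j hYij
    by_contra hne
    exact h i j hne hYij
  have hinj : ∀ᵐ x ∂(Measure.pi fun _ : Fin n => ν), Function.Injective x := by
    rw [← hjoint]
    rw [ae_map_iff hYm.aemeasurable measurableSet_injective]
    exact haeP
  -- change of variables
  have hgm : Measurable (fun x : Fin n → ℝ => (Itil1 ev a b x) ^ 2 * Itil1 ev c d x) :=
    ((meas_itil a b).pow_const 2).mul (meas_itil c d)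
  have hchange : ∫ ω, (Itil1 X a b ω) ^ 2 * Itil1 X c d ω ∂P
      = ∫ x, (Itil1 (ev (n := n)) a b x) ^ 2 * Itil1 ev c d x
          ∂(Measure.pi fun _ : Fin n => ν) := by
    rw [← hjoint, integral_map hYm.aemeasurable hgm.aestronglyMeasurable]
    rfl
  rw [hchange]
  exact main_bound hn ν hinj hab hcd hca hcb hda hdb
end
end

section
/- Let d, k, ℓ ∈ ℕ with 2 ≤ k ≤ d/2 and 0 ≤ ℓ ≤ k−1. Let V_k(ℓ) be the set of pairs (p, q) ∈ P(d,k) × P(d,k) such that p_k < q_k and the sets {p_1,…,p_k} and {q_1,…,q_k} intersect in exactly ℓ elements. Then V_k(ℓ) is in bijection with P(d, 2k−ℓ) × P(2k−ℓ−1, k−1) × P(k−1, ℓ); in particular |V_k(ℓ)| = C(d, 2k−ℓ) · C(2k−ℓ−1, k−1) · C(k−1, ℓ), where C(a,b) denotes the binomial coefficient. -/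
open Finset

/-- `P(a,b)`: the strictly increasing `b`-tuples with entries in `{1,…,a}`. -/
def IncTup (a b : ℕ) : Type := {f : Fin b → Fin a // StrictMono f}

/-- The last entry `p_b` of a strictly increasing tuple (for `b > 0`). -/
def lastEntry {a b : ℕ} (hb : 0 < b) (f : IncTup a b) : Fin a :=
  f.1 ⟨b - 1, by omega⟩

/-- The set `V_k(ℓ)` of pairs `(p, q)` of strictly increasing `k`-tuples with `p_k < q_k`
whose entry sets intersect in exactly `ℓ` elements. -/
def Vset (d k ℓ : ℕ) (hk : 0 < k) : Set (IncTup d k × IncTup d k) :=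
  {pq | lastEntry hk pq.1 < lastEntry hk pq.2 ∧
    ((Finset.univ.image pq.1.1) ∩ (Finset.univ.image pq.2.1)).card = ℓ}

instance (a b : ℕ) : Fintype (IncTup a b) := by
  unfold IncTup
  exact Subtype.fintype _

/-- Strictly increasing `b`-tuples in `Fin a` are the same as `b`-element subsets. -/
def incTupEquiv (a b : ℕ) : IncTup a b ≃ {s : Finset (Fin a) // s.card = b} where
  toFun f := ⟨Finset.univ.image f.1, by
    rw [Finset.card_image_of_injective _ f.2.injective, Finset.card_univ, Fintype.card_fin]⟩
  invFun s := ⟨s.1.orderEmbOfFin s.2, (s.1.orderEmbOfFin s.2).strictMono⟩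
  left_inv f := Subtype.ext
    (Finset.orderEmbOfFin_unique _ (fun x => Finset.mem_image_of_mem _ (Finset.mem_univ x))
      f.2).symm
  right_inv s := by
    apply Subtype.ext
    rw [← Finset.coe_inj, Finset.coe_image, Finset.coe_univ, Set.image_univ]
    exact Finset.range_orderEmbOfFin s.1 s.2

lemma natCard_incTup (a b : ℕ) : Nat.card (IncTup a b) = a.choose b := by
  rw [Nat.card_congr (incTupEquiv a b), Nat.card_eq_fintype_card, Fintype.card_finset_len,
    Fintype.card_fin]

lemma max_image_eq {a b : ℕ} (hb : 0 < b) (f : IncTup a b) :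
    (Finset.univ.image f.1).max = (lastEntry hb f : WithBot (Fin a)) := by
  have hne : (Finset.univ.image f.1).Nonempty :=
    ⟨f.1 ⟨0, hb⟩, Finset.mem_image_of_mem _ (Finset.mem_univ _)⟩
  rw [← Finset.coe_max' hne]
  congr 1
  apply le_antisymm
  · apply Finset.max'_le
    intro y hy
    obtain ⟨i, -, rfl⟩ := Finset.mem_image.1 hy
    have hi := i.isLt
    have hle : i ≤ (⟨b - 1, by omega⟩ : Fin b) := Fin.le_def.2 (by simp only []; omega)
    exact f.2.monotone hle
  · exact Finset.le_max' _ (lastEntry hb f) (Finset.mem_image_of_mem f.1 (Finset.mem_univ _))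

lemma count_lemma (d k ℓ : ℕ) (hk : 2 ≤ k) (hkd : 2 * k ≤ d) (hℓ : ℓ ≤ k - 1) :
    Nat.card {x : Finset (Fin d) × Finset (Fin d) //
      x.1.card = k ∧ x.2.card = k ∧ x.1.max < x.2.max ∧ (x.1 ∩ x.2).card = ℓ} =
    d.choose (2 * k - ℓ) * (2 * k - ℓ - 1).choose (k - 1) * (k - 1).choose ℓ := by
  have hd0 : 0 < d := by omega
  set m := 2 * k - ℓ with hm
  -- the "max" function, junk value for ∅
  set M : Finset (Fin d) → Fin d := fun U => WithBot.unbotD ⟨0, hd0⟩ U.max with hM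
  have hMne : ∀ (U : Finset (Fin d)) (h : U.Nonempty), M U = U.max' h := by
    intro U h
    rw [hM]
    simp only
    rw [← Finset.coe_max' h, WithBot.unbotD_coe]
  -- target finset
  set T : Finset (Σ _ : Finset (Fin d), Σ _ : Finset (Fin d), Finset (Fin d)) :=
    (Finset.univ.powersetCard m).sigma (fun U =>
      ((U.erase (M U)).powersetCard (k - 1)).sigma (fun R => R.powersetCard ℓ)) with hT
  rw [Nat.card_eq_fintype_card, Fintype.card_subtype]
  have key : (Finset.univ.filter (fun x : Finset (Fin d) × Finset (Fin d) =>
      x.1.card = k ∧ x.2.card = k ∧ x.1.max < x.2.max ∧ (x.1 ∩ x.2).card = ℓ)).card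
      = T.card := by
    apply Finset.card_nbij' (fun x => ⟨x.1 ∪ x.2, ⟨x.2.erase (M (x.1 ∪ x.2)), x.1 ∩ x.2⟩⟩)
      (fun y => ⟨(y.1 \ insert (M y.1) y.2.1) ∪ y.2.2, insert (M y.1) y.2.1⟩)
    · -- forward maps into T
      rintro ⟨P, Q⟩ hx
      simp only [Finset.mem_coe, Finset.mem_filter] at hx
      obtain ⟨-, hP, hQ, hmax, hI⟩ := hx
      have Pne : P.Nonempty := Finset.card_pos.1 (by omega)
      have Qne : Q.Nonempty := Finset.card_pos.1 (by omega)
      have Une : (P ∪ Q).Nonempty := Pne.mono Finset.subset_union_left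
      have hmax' : P.max' Pne < Q.max' Qne := by
        rw [← WithBot.coe_lt_coe, Finset.coe_max', Finset.coe_max']; exact hmax
      have hMU : M (P ∪ Q) = Q.max' Qne := by
        rw [hMne _ Une]
        apply le_antisymm
        · apply Finset.max'_le
          intro y hy
          rcases Finset.mem_union.1 hy with h | h
          · exact (Finset.le_max' P y h).trans hmax'.le
          · exact Finset.le_max' Q y h
        · exact Finset.le_max' _ _ (Finset.mem_union_right _ (Q.max'_mem Qne))
      have hMQ : M (P ∪ Q) ∈ Q := hMU ▸ Q.max'_mem Qne
      have hMnP : M (P ∪ Q) ∉ P := by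
        intro h
        have h1 : M (P ∪ Q) ≤ P.max' Pne := Finset.le_max' P _ h
        rw [hMU] at h1
        exact absurd h1 (not_le.2 hmax')
      have hUcard : (P ∪ Q).card = m := by
        have := Finset.card_union_add_card_inter P Q
        omega
      simp only [hT, Finset.mem_coe, Finset.mem_sigma, Finset.mem_powersetCard]
      refine ⟨⟨Finset.subset_univ _, hUcard⟩, ⟨?_, ?_⟩, ?_, hI⟩
      · exact Finset.erase_subset_erase _ Finset.subset_union_right
      · rw [Finset.card_erase_of_mem hMQ, hQ]
      · intro x hx
        rw [Finset.mem_inter] at hx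
        exact Finset.mem_erase.2 ⟨fun h => hMnP (h ▸ hx.1), hx.2⟩
    · -- backward maps into the filter
      rintro ⟨U, R, I⟩ hy
      simp only [hT, Finset.mem_coe, Finset.mem_sigma, Finset.mem_powersetCard] at hy
      obtain ⟨⟨-, hU⟩, ⟨hRU, hR⟩, hIR, hI⟩ := hy
      have Une : U.Nonempty := Finset.card_pos.1 (by omega)
      have hMU : M U = U.max' Une := hMne U Une
      have hMmem : M U ∈ U := hMU ▸ U.max'_mem Une
      have hMnR : M U ∉ R := fun h => (Finset.mem_erase.1 (hRU h)).1 rfl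
      set Q := insert (M U) R with hQdef
      have hQU : Q ⊆ U := Finset.insert_subset hMmem (hRU.trans (Finset.erase_subset _ _))
      have hQcard : Q.card = k := by
        rw [hQdef, Finset.card_insert_of_notMem hMnR, hR]; omega
      have hIQ : I ⊆ Q := hIR.trans (Finset.subset_insert _ _)
      set P := (U \ Q) ∪ I with hPdef
      have hdisj : Disjoint (U \ Q) I :=
        Finset.disjoint_left.2 fun a ha hb => (Finset.mem_sdiff.1 ha).2 (hIQ hb)
      have hPcard : P.card = k := by
        rw [hPdef, Finset.card_union_of_disjoint hdisj, Finset.card_sdiff_of_subset hQU, hU, hQcard, hI]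
        omega
      have hPQI : P ∩ Q = I := by
        rw [hPdef, Finset.union_inter_distrib_right]
        rw [Finset.sdiff_inter_self, Finset.empty_union, Finset.inter_eq_left.2 hIQ]
      have hltMU : ∀ x ∈ U.erase (M U), x < M U := by
        intro x hx
        rw [hMU] at hx ⊢
        exact Finset.lt_max'_of_mem_erase_max' _ _ hx
      have Pne : P.Nonempty := Finset.card_pos.1 (by omega)
      have Qne : Q.Nonempty := ⟨M U, Finset.mem_insert_self _ _⟩
      have hQmax : Q.max' Qne = M U := by
        apply le_antisymm
        · apply Finset.max'_le
          intro y hy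
          rcases Finset.mem_insert.1 hy with rfl | hy
          · exact le_rfl
          · exact (hltMU y (hRU hy)).le
        · exact Finset.le_max' _ _ (Finset.mem_insert_self _ _)
      have hPmax : P.max' Pne < M U := by
        rw [Finset.max'_lt_iff]
        intro y hy
        rcases Finset.mem_union.1 hy with hy | hy
        · rw [Finset.mem_sdiff] at hy
          apply hltMU
          exact Finset.mem_erase.2 ⟨fun h => hy.2 (h ▸ Finset.mem_insert_self _ _), hy.1⟩
        · exact hltMU _ (hRU (hIR hy))
      refine Finset.mem_filter.2 ⟨Finset.mem_univ _, hPcard, hQcard, ?_, by rw [hPQI, hI]⟩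
      rw [← Finset.coe_max' Pne, ← Finset.coe_max' Qne, WithBot.coe_lt_coe, hQmax]
      exact hPmax
    · -- left inverse
      rintro ⟨P, Q⟩ hx
      simp only [Finset.mem_coe, Finset.mem_filter] at hx
      obtain ⟨-, hP, hQ, hmax, hI⟩ := hx
      have Pne : P.Nonempty := Finset.card_pos.1 (by omega)
      have Qne : Q.Nonempty := Finset.card_pos.1 (by omega)
      have Une : (P ∪ Q).Nonempty := Pne.mono Finset.subset_union_left
      have hmax' : P.max' Pne < Q.max' Qne := by
        rw [← WithBot.coe_lt_coe, Finset.coe_max', Finset.coe_max']; exact hmax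
      have hMU : M (P ∪ Q) = Q.max' Qne := by
        rw [hMne _ Une]
        apply le_antisymm
        · apply Finset.max'_le
          intro y hy
          rcases Finset.mem_union.1 hy with h | h
          · exact (Finset.le_max' P y h).trans hmax'.le
          · exact Finset.le_max' Q y h
        · exact Finset.le_max' _ _ (Finset.mem_union_right _ (Q.max'_mem Qne))
      have hMQ : M (P ∪ Q) ∈ Q := hMU ▸ Q.max'_mem Qne
      simp only
      rw [Finset.insert_erase hMQ]
      refine Prod.ext ?_ rfl
      simp only
      rw [Finset.union_sdiff_right, Finset.sdiff_union_inter]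
    · -- right inverse
      rintro ⟨U, R, I⟩ hy
      simp only [hT, Finset.mem_coe, Finset.mem_sigma, Finset.mem_powersetCard] at hy
      obtain ⟨⟨-, hU⟩, ⟨hRU, hR⟩, hIR, hI⟩ := hy
      have Une : U.Nonempty := Finset.card_pos.1 (by omega)
      have hMU : M U = U.max' Une := hMne U Une
      have hMmem : M U ∈ U := hMU ▸ U.max'_mem Une
      have hMnR : M U ∉ R := fun h => (Finset.mem_erase.1 (hRU h)).1 rfl
      have hQU : insert (M U) R ⊆ U :=
        Finset.insert_subset hMmem (hRU.trans (Finset.erase_subset _ _))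
      have hIQ : I ⊆ insert (M U) R := hIR.trans (Finset.subset_insert _ _)
      have hPQ : ((U \ insert (M U) R) ∪ I) ∪ insert (M U) R = U := by
        rw [Finset.union_assoc, Finset.union_eq_right.2 hIQ,
          Finset.sdiff_union_of_subset hQU]
      have hPQI : ((U \ insert (M U) R) ∪ I) ∩ insert (M U) R = I := by
        rw [Finset.union_inter_distrib_right, Finset.sdiff_inter_self, Finset.empty_union,
          Finset.inter_eq_left.2 hIQ]
      show (⟨_, _, _⟩ : Σ _ : Finset (Fin d), Σ _ : Finset (Fin d), Finset (Fin d)) = _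
      rw [hPQ, hPQI, Finset.erase_insert hMnR]
  rw [key, hT, Finset.card_sigma]
  have houter : ∀ U ∈ Finset.univ.powersetCard m (α := Fin d),
      (((U.erase (M U)).powersetCard (k - 1)).sigma (fun R => R.powersetCard ℓ)).card
      = (m - 1).choose (k - 1) * (k - 1).choose ℓ := by
    intro U hUmem
    rw [Finset.mem_powersetCard] at hUmem
    have Une : U.Nonempty := Finset.card_pos.1 (by omega)
    have hMU : M U = U.max' Une := by
      rw [hM]; simp only; rw [← Finset.coe_max' Une, WithBot.unbotD_coe]
    have hMmem : M U ∈ U := hMU ▸ U.max'_mem Une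
    have hcard : (U.erase (M U)).card = m - 1 := by
      rw [Finset.card_erase_of_mem hMmem, hUmem.2]
    rw [Finset.card_sigma]
    have hinner : ∀ R ∈ (U.erase (M U)).powersetCard (k - 1),
        (R.powersetCard ℓ).card = (k - 1).choose ℓ := by
      intro R hR
      rw [Finset.mem_powersetCard] at hR
      rw [Finset.card_powersetCard, hR.2]
    rw [Finset.sum_congr rfl hinner, Finset.sum_const, Finset.card_powersetCard, hcard,
      smul_eq_mul]
  rw [Finset.sum_congr rfl houter, Finset.sum_const, Finset.card_powersetCard,
    Finset.card_univ, Fintype.card_fin, smul_eq_mul, mul_assoc]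

/-- For `2 ≤ k ≤ d/2` and `0 ≤ ℓ ≤ k−1`, the set `V_k(ℓ)` is in
bijection with `P(d, 2k−ℓ) × P(2k−ℓ−1, k−1) × P(k−1, ℓ)`; in particular its cardinality
is `C(d, 2k−ℓ) · C(2k−ℓ−1, k−1) · C(k−1, ℓ)`. -/
theorem stmt_18 (d k ℓ : ℕ) (hk : 2 ≤ k) (hkd : 2 * k ≤ d) (hℓ : ℓ ≤ k - 1) :
    Nonempty (↥(Vset d k ℓ (by omega)) ≃
      IncTup d (2 * k - ℓ) × IncTup (2 * k - ℓ - 1) (k - 1) × IncTup (k - 1) ℓ) ∧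
    Nat.card ↥(Vset d k ℓ (by omega)) =
      d.choose (2 * k - ℓ) * (2 * k - ℓ - 1).choose (k - 1) * (k - 1).choose ℓ := by
  classical
  have hk0 : 0 < k := by omega
  -- translate Vset to pairs of finsets
  have step1 : ↥(Vset d k ℓ (by omega)) ≃
      {z : {s : Finset (Fin d) // s.card = k} × {s : Finset (Fin d) // s.card = k} //
        z.1.1.max < z.2.1.max ∧ (z.1.1 ∩ z.2.1).card = ℓ} := by
    refine Equiv.subtypeEquiv ((incTupEquiv d k).prodCongr (incTupEquiv d k)) ?_
    rintro ⟨p, q⟩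
    show (lastEntry hk0 p < lastEntry hk0 q ∧
        ((Finset.univ.image p.1) ∩ (Finset.univ.image q.1)).card = ℓ) ↔
      ((Finset.univ.image p.1).max < (Finset.univ.image q.1).max ∧
        ((Finset.univ.image p.1) ∩ (Finset.univ.image q.1)).card = ℓ)
    rw [max_image_eq hk0 p, max_image_eq hk0 q, WithBot.coe_lt_coe]
  have step2 : {z : {s : Finset (Fin d) // s.card = k} × {s : Finset (Fin d) // s.card = k} //
        z.1.1.max < z.2.1.max ∧ (z.1.1 ∩ z.2.1).card = ℓ} ≃
      {x : Finset (Fin d) × Finset (Fin d) //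
        x.1.card = k ∧ x.2.card = k ∧ x.1.max < x.2.max ∧ (x.1 ∩ x.2).card = ℓ} :=
    { toFun := fun z => ⟨(z.1.1.1, z.1.2.1), z.1.1.2, z.1.2.2, z.2⟩
      invFun := fun y => ⟨(⟨y.1.1, y.2.1⟩, ⟨y.1.2, y.2.2.1⟩), y.2.2.2⟩
      left_inv := fun z => Subtype.ext (Prod.ext (Subtype.ext rfl) (Subtype.ext rfl))
      right_inv := fun y => Subtype.ext rfl }
  have e := step1.trans step2
  have hcard : Nat.card ↥(Vset d k ℓ (by omega)) =
      d.choose (2 * k - ℓ) * (2 * k - ℓ - 1).choose (k - 1) * (k - 1).choose ℓ := by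
    rw [Nat.card_congr e, count_lemma d k ℓ hk hkd hℓ]
  refine ⟨?_, hcard⟩
  have hrhs : Nat.card (IncTup d (2 * k - ℓ) × IncTup (2 * k - ℓ - 1) (k - 1) ×
      IncTup (k - 1) ℓ) =
      d.choose (2 * k - ℓ) * (2 * k - ℓ - 1).choose (k - 1) * (k - 1).choose ℓ := by
    rw [Nat.card_prod, Nat.card_prod, natCard_incTup, natCard_incTup, natCard_incTup,
      mul_assoc]
  have : Fintype ↥(Vset d k ℓ (by omega : 0 < k)) := Fintype.ofFinite _
  exact ⟨Fintype.equivOfCardEq (by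
    rw [← Nat.card_eq_fintype_card, ← Nat.card_eq_fintype_card, hcard, hrhs])⟩
end

section
/- Let d, k ∈ ℕ with k ≥ 2 and let λ ∈ {0,…,k−1}. Say that a quadruple P = (p^{(1)}, p^{(2)}, p^{(3)}, p^{(4)}) ∈ P(d,k)⁴ satisfies the 2-matching condition if for every ℓ ∈ {1,…,k−1} and every i ∈ {1,…,4} there exists a pair (ℓ', j) ≠ (ℓ, i) with ℓ' ∈ {1,…,k−1} and j ∈ {1,…,4} such that p^{(i)}_ℓ = p^{(j)}_{ℓ'}. Let W_k(λ) be the set of quadruples P ∈ P(d,k)⁴ satisfying the 2-matching condition with p^{(1)}_k = p^{(2)}_k < p^{(3)}_k = p^{(4)}_k and such that the set of all entries {p^{(i)}_ℓ : 1 ≤ ℓ ≤ k, 1 ≤ i ≤ 4} has exactly 2k−λ elements, and let U_k(λ) be the set of quadruples P ∈ P(d,k)⁴ satisfying the 2-matching condition with p^{(1)}_k = p^{(2)}_k = p^{(3)}_k = p^{(4)}_k and whose set of all entries has exactly 2k−1−λ elements. Then there are injections from W_k(λ) into P(d, 2k−λ) × {0,1}^{8k} and from U_k(λ) into P(d, 2k−1−λ)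 × {0,1}^{8k}; consequently |W_k(λ)| ≤ 256^k · C(d, 2k−λ) and |U_k(λ)| ≤ 256^k · C(d, 2k−1−λ). -/
open Finset

def TwoMatching {d k : ℕ} (P : Fin 4 → IncTup d k) : Prop :=
  ∀ (ℓ : Fin (k - 1)) (i : Fin 4), ∃ (ℓ' : Fin (k - 1)) (j : Fin 4),
    (ℓ', j) ≠ (ℓ, i) ∧
      (P i).1 (Fin.castLE (Nat.sub_le k 1) ℓ) = (P j).1 (Fin.castLE (Nat.sub_le k 1) ℓ')

def entriesSet {d k : ℕ} (P : Fin 4 → IncTup d k) : Finset (Fin d) :=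
  Finset.univ.biUnion fun i : Fin 4 => Finset.univ.image (P i).1

def Wset (d k lam : ℕ) (hk : 0 < k) : Set (Fin 4 → IncTup d k) :=
  {P | TwoMatching P ∧
    lastEntry hk (P 0) = lastEntry hk (P 1) ∧
    lastEntry hk (P 1) < lastEntry hk (P 2) ∧
    lastEntry hk (P 2) = lastEntry hk (P 3) ∧
    (entriesSet P).card = 2 * k - lam}

def Uset (d k lam : ℕ) (hk : 0 < k) : Set (Fin 4 → IncTup d k) :=
  {P | TwoMatching P ∧
    lastEntry hk (P 0) = lastEntry hk (P 1) ∧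
    lastEntry hk (P 1) = lastEntry hk (P 2) ∧
    lastEntry hk (P 2) = lastEntry hk (P 3) ∧
    (entriesSet P).card = 2 * k - 1 - lam}

lemma strictMono_eq_of_image_eq {k d : ℕ} {f g : Fin k → Fin d}
    (hf : StrictMono f) (hg : StrictMono g)
    (h : Finset.univ.image f = Finset.univ.image g) : f = g := by
  have hcard : (Finset.univ.image f).card = k := by
    rw [Finset.card_image_of_injective _ hf.injective, Finset.card_univ, Fintype.card_fin]
  have h1 : f = (Finset.univ.image f).orderEmbOfFin hcard :=
    Finset.orderEmbOfFin_unique hcard (fun x => Finset.mem_image_of_mem _ (Finset.mem_univ x)) hf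
  have h2 : g = (Finset.univ.image f).orderEmbOfFin hcard :=
    Finset.orderEmbOfFin_unique hcard (fun x => h ▸ Finset.mem_image_of_mem _ (Finset.mem_univ x)) hg
  rw [h1, h2]

noncomputable def encode {d k : ℕ} (m : ℕ)
    (S : Set (Fin 4 → IncTup d k)) (hS : ∀ P ∈ S, (entriesSet P).card = m) :
    ↥S → IncTup d m × (Fin 4 × Fin (2 * k) → Bool) :=
  fun P =>
    (⟨fun t => (entriesSet P.1).orderEmbOfFin (hS P.1 P.2) t,
       ((entriesSet P.1).orderEmbOfFin (hS P.1 P.2)).strictMono⟩,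
     fun it =>
       if ht : (it.2 : ℕ) < m then
         decide ((entriesSet P.1).orderEmbOfFin (hS P.1 P.2) ⟨it.2, ht⟩
           ∈ Finset.univ.image (P.1 it.1).1)
       else false)

lemma encode_injective {d k : ℕ} (m : ℕ) (hmk : m ≤ 2 * k)
    (S : Set (Fin 4 → IncTup d k)) (hS : ∀ P ∈ S, (entriesSet P).card = m) :
    Function.Injective (encode m S hS) := by
  rintro ⟨P, hP⟩ ⟨Q, hQ⟩ h
  set eP := (entriesSet P).orderEmbOfFin (hS P hP) with heP
  set eQ := (entriesSet Q).orderEmbOfFin (hS Q hQ) with heQ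
  have h1 := congrArg Prod.fst h
  have h2 := congrArg Prod.snd h
  simp only [encode] at h1 h2
  have h1' : ∀ t : Fin m, eP t = eQ t := fun t =>
    congrFun (congrArg Subtype.val h1) t
  have key : ∀ (i : Fin 4) (x : Fin d) (t : Fin m),
      eP t = x → x ∈ Finset.univ.image (P i).1 → x ∈ Finset.univ.image (Q i).1 := by
    intro i x t hte hx
    have htk : (t : ℕ) < 2 * k := lt_of_lt_of_le t.2 hmk
    have hb := congrFun h2 (i, ⟨t, htk⟩)
    simp only at hb
    rw [dif_pos t.2, dif_pos t.2] at hb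
    have hPb : decide (eP ⟨(t : ℕ), t.2⟩ ∈ Finset.univ.image (P i).1) = true := by
      rw [decide_eq_true_iff]
      simpa [Fin.eta, hte] using hx
    rw [show (⟨(t : ℕ), t.2⟩ : Fin m) = t from rfl] at hPb hb
    rw [hPb] at hb
    have := (decide_eq_true_iff).1 hb.symm
    rwa [← h1' t, hte] at this
  have key' : ∀ i : Fin 4, Finset.univ.image (P i).1 = Finset.univ.image (Q i).1 := by
    intro i
    ext x
    constructor
    · intro hx
      have hxE : x ∈ entriesSet P := Finset.mem_biUnion.2 ⟨i, Finset.mem_univ _, hx⟩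
      have : x ∈ Set.range eP := by rw [Finset.range_orderEmbOfFin]; exact hxE
      obtain ⟨t, ht⟩ := this
      exact key i x t ht hx
    · intro hx
      have hxE : x ∈ entriesSet Q := Finset.mem_biUnion.2 ⟨i, Finset.mem_univ _, hx⟩
      have : x ∈ Set.range eQ := by rw [Finset.range_orderEmbOfFin]; exact hxE
      obtain ⟨t, ht⟩ := this
      -- need symmetric version; reuse key with roles swapped by symmetry of hypotheses
      have htk : (t : ℕ) < 2 * k := lt_of_lt_of_le t.2 hmk
      have hb := congrFun h2 (i, ⟨t, htk⟩)
      simp only at hb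
      rw [dif_pos t.2, dif_pos t.2] at hb
      have hQb : decide (eQ ⟨(t : ℕ), t.2⟩ ∈ Finset.univ.image (Q i).1) = true := by
        rw [decide_eq_true_iff]
        simpa [Fin.eta, ht] using hx
      rw [show (⟨(t : ℕ), t.2⟩ : Fin m) = t from rfl] at hQb hb
      rw [hQb] at hb
      have := (decide_eq_true_iff).1 hb
      rwa [h1' t, ht] at this
  have : P = Q := by
    funext i
    exact Subtype.ext (strictMono_eq_of_image_eq (P i).2 (Q i).2 (key' i))
  exact Subtype.ext this

noncomputable instance inst_s19 (a b : ℕ) : Fintype (IncTup a b) :=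
  Subtype.fintype _

lemma card_IncTup_le (a b : ℕ) : Nat.card (IncTup a b) ≤ a.choose b := by
  have hinj : Function.Injective
      (fun f : IncTup a b => (⟨Finset.univ.image f.1, by
        rw [Finset.card_image_of_injective _ f.2.injective, Finset.card_univ,
          Fintype.card_fin]⟩ : {s : Finset (Fin a) // s.card = b})) := by
    rintro ⟨f, hf⟩ ⟨g, hg⟩ h
    exact Subtype.ext (strictMono_eq_of_image_eq hf hg (congrArg Subtype.val h))
  calc Nat.card (IncTup a b) ≤ Nat.card {s : Finset (Fin a) // s.card = b} :=
        Nat.card_le_card_of_injective _ hinj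
    _ = a.choose b := by
        rw [Nat.card_eq_fintype_card, Fintype.card_finset_len, Fintype.card_fin]

lemma card_S_le {d k : ℕ} (m : ℕ) (hmk : m ≤ 2 * k)
    (S : Set (Fin 4 → IncTup d k)) (hS : ∀ P ∈ S, (entriesSet P).card = m) :
    Nat.card ↥S ≤ 256 ^ k * d.choose m := by
  calc Nat.card ↥S ≤ Nat.card (IncTup d m × (Fin 4 × Fin (2 * k) → Bool)) :=
        Nat.card_le_card_of_injective _ (encode_injective m hmk S hS)
    _ = Nat.card (IncTup d m) * 2 ^ (4 * (2 * k)) := by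
        rw [Nat.card_prod, Nat.card_fun, Nat.card_prod]
        simp [Nat.card_eq_fintype_card, pow_mul]
    _ ≤ d.choose m * 256 ^ k := by
        have : (2 : ℕ) ^ (4 * (2 * k)) = 256 ^ k := by
          rw [show 4 * (2 * k) = 8 * k from by ring, pow_mul]; norm_num
        rw [this]
        exact Nat.mul_le_mul_right _ (card_IncTup_le d m)
    _ = 256 ^ k * d.choose m := Nat.mul_comm _ _

/-- For `k ≥ 2` and `0 ≤ λ ≤ k−1` there are injections from `W_k(λ)`
into `P(d, 2k−λ) × {0,1}^{8k}` and from `U_k(λ)` into `P(d, 2k−1−λ) × {0,1}^{8k}`;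
consequently `|W_k(λ)| ≤ 256^k · C(d, 2k−λ)` and `|U_k(λ)| ≤ 256^k · C(d, 2k−1−λ)`. -/
theorem stmt_19 (d k lam : ℕ) (hk : 2 ≤ k) (hlam : lam ≤ k - 1) :
    (∃ f : ↥(Wset d k lam (by omega)) →
        IncTup d (2 * k - lam) × (Fin (8 * k) → Bool), Function.Injective f) ∧
    (∃ g : ↥(Uset d k lam (by omega)) →
        IncTup d (2 * k - 1 - lam) × (Fin (8 * k) → Bool), Function.Injective g) ∧
    Nat.card ↥(Wset d k lam (by omega)) ≤ 256 ^ k * d.choose (2 * k - lam) ∧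
    Nat.card ↥(Uset d k lam (by omega)) ≤ 256 ^ k * d.choose (2 * k - 1 - lam) := by
  have hW : ∀ P ∈ Wset d k lam (by omega : 0 < k), (entriesSet P).card = 2 * k - lam :=
    fun P hP => hP.2.2.2.2
  have hU : ∀ P ∈ Uset d k lam (by omega : 0 < k), (entriesSet P).card = 2 * k - 1 - lam :=
    fun P hP => hP.2.2.2.2
  have e : (Fin 4 × Fin (2 * k) → Bool) ≃ (Fin (8 * k) → Bool) :=
    Equiv.arrowCongr ((finProdFinEquiv).trans (finCongr (by ring))) (Equiv.refl _)
  refine ⟨⟨fun P => ((encode _ _ hW P).1, e (encode _ _ hW P).2), ?_⟩,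
    ⟨fun P => ((encode _ _ hU P).1, e (encode _ _ hU P).2), ?_⟩,
    card_S_le _ (by omega) _ hW, card_S_le _ (by omega) _ hU⟩
  · intro x y h
    apply encode_injective (2 * k - lam) (by omega) _ hW
    have h1 := congrArg Prod.fst h
    have h2 := e.injective (congrArg Prod.snd h)
    exact Prod.ext h1 h2
  · intro x y h
    apply encode_injective (2 * k - 1 - lam) (by omega) _ hU
    have h1 := congrArg Prod.fst h
    have h2 := e.injective (congrArg Prod.snd h)
    exact Prod.ext h1 h2
end
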